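/- arXiv:2603.09797 — 3 statements merged into one kernel-verified Lean document; each statement's English description precedes it below -/
import Mathlib

section
/- If G is an R-disjoint graph, then every maximum matching M of G contains exactly ⌊|V(C)|/2⌋ edges from each odd cycle C of G. -/
open SimpleGraph

universe u

variable {V : Type u}

/-- `S` is an independent set of `G`. -/
def IsIndep (G : SimpleGraph V) (S : Set V) : Prop :=
  ∀ ⦃u⦄, u ∈ S → ∀ ⦃v⦄, v ∈ S → ¬ G.Adj u v

/-- The neighborhood `N(S)` of a vertex set. -/
def NSet (G : SimpleGraph V) (S : Set V) : Set V := {v | ∃ u ∈ S, G.Adj u v}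

/-- `S` is a maximum independent set of `G`. -/
def IsMaxIndep (G : SimpleGraph V) (S : Set V) : Prop :=
  IsIndep G S ∧ ∀ T : Set V, IsIndep G T → T.ncard ≤ S.ncard

/-- The independence number `α(G)`. -/
noncomputable def indepNum (G : SimpleGraph V) : ℕ :=
  sSup {n | ∃ S : Set V, IsIndep G S ∧ S.ncard = n}

/-- `core(G)`: intersection of all maximum independent sets. -/
def core (G : SimpleGraph V) : Set V := ⋂₀ {S | IsMaxIndep G S}

/-- `corona(G)`: union of all maximum independent sets. -/
def corona (G : SimpleGraph V) : Set V := ⋃₀ {S | IsMaxIndep G S}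

/-- The difference `d_G(S) = |S| - |N(S)|`, as an integer. -/
noncomputable def diffZ (G : SimpleGraph V) (S : Set V) : ℤ :=
  (S.ncard : ℤ) - ((NSet G S).ncard : ℤ)

/-- `S` is a critical independent set: independent and maximizing `|S| - |N(S)|`
among independent sets. -/
def IsCriticalIndep (G : SimpleGraph V) (S : Set V) : Prop :=
  IsIndep G S ∧ ∀ T : Set V, IsIndep G T → diffZ G T ≤ diffZ G S

/-- `ker(G)`: intersection of all critical independent sets. -/
def kerSet (G : SimpleGraph V) : Set V := ⋂₀ {S | IsCriticalIndep G S}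

/-- `M` is a maximum matching of `G`. -/
def IsMaxMatching (G : SimpleGraph V) (M : G.Subgraph) : Prop :=
  M.IsMatching ∧ ∀ M' : G.Subgraph, M'.IsMatching → M'.edgeSet.ncard ≤ M.edgeSet.ncard

/-- The matching number `μ(G)`. -/
noncomputable def matchNum (G : SimpleGraph V) : ℕ :=
  sSup {n | ∃ M : G.Subgraph, M.IsMatching ∧ M.edgeSet.ncard = n}

/-- `D(G)`: vertices missed by some maximum matching. -/
def DSet (G : SimpleGraph V) : Set V :=
  {v | ∃ M : G.Subgraph, IsMaxMatching G M ∧ v ∉ M.verts}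

/-- `C` is the vertex set of an odd cycle of `G`. -/
def IsOddCycle (G : SimpleGraph V) (C : Set V) : Prop :=
  ∃ (u : V) (w : G.Walk u u), w.IsCycle ∧ Odd w.length ∧ ∀ v, v ∈ w.support ↔ v ∈ C

/-- An edge list is `M`-alternating: consecutive edges, exactly one in `M`. -/
def Alternating (G : SimpleGraph V) (M : G.Subgraph) (l : List (Sym2 V)) : Prop :=
  List.Chain' (fun e f => (e ∈ M.edgeSet ↔ f ∉ M.edgeSet)) l

/-- `w` is an `M`-blossom with base `b`: an odd cycle, alternating, whose two
edges at the base are unmatched (so it carries `⌊length/2⌋` matched edges). -/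
structure IsBlossom (G : SimpleGraph V) (M : G.Subgraph) (b : V) (w : G.Walk b b) : Prop where
  cyc : w.IsCycle
  odd : Odd w.length
  alt : Alternating G M w.edges
  first : ∀ e ∈ w.edges.head?, e ∉ M.edgeSet
  last : ∀ e ∈ w.edges.getLast?, e ∉ M.edgeSet

/-- `p` is an `M`-stem from base `b` to root `r`: an even alternating path
starting (if nonempty) with a matched edge, whose root is `M`-unsaturated. -/
structure IsStem (G : SimpleGraph V) (M : G.Subgraph) (b r : V) (p : G.Walk b r) : Prop where
  path : p.IsPath
  even : Even p.length
  alt : Alternating G M p.edges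
  first : ∀ e ∈ p.edges.head?, e ∈ M.edgeSet
  root : r ∉ M.verts

/-- `F` is the vertex set of an `M`-flower of `G` whose blossom has vertex set `C`. -/
def IsFlowerOn (G : SimpleGraph V) (M : G.Subgraph) (C F : Set V) : Prop :=
  ∃ (b r : V) (w : G.Walk b b) (p : G.Walk b r),
    IsBlossom G M b w ∧ IsStem G M b r p ∧
    (∀ v, v ∈ w.support ↔ v ∈ C) ∧
    (∀ v, v ∈ p.support → v ∈ w.support → v = b) ∧
    F = {v | v ∈ w.support ∨ v ∈ p.support}

/-- The reach set `R(C)` of an odd cycle `C`: union of the vertex sets of all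
`M`-flowers with blossom `C`, over all maximum matchings `M`. -/
def reach (G : SimpleGraph V) (C : Set V) : Set V :=
  ⋃₀ {F | ∃ M : G.Subgraph, IsMaxMatching G M ∧ IsFlowerOn G M C F}

/-- `G` is `R`-disjoint: it has an odd cycle, every odd cycle has nonempty reach
set, and reach sets of distinct odd cycles are disjoint. -/
def RDisjoint (G : SimpleGraph V) : Prop :=
  (∃ C : Set V, IsOddCycle G C) ∧
  (∀ C : Set V, IsOddCycle G C → (reach G C).Nonempty) ∧
  (∀ C C' : Set V, IsOddCycle G C → IsOddCycle G C' → C ≠ C' →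
    reach G C ∩ reach G C' = ∅)

/-- `B(G) = V(G) \ ⋃_C R(C)`. -/
def bipartPart (G : SimpleGraph V) : Set V :=
  {v | ∀ C : Set V, IsOddCycle G C → v ∉ reach G C}

/-- `G` is bipartite: its vertex set splits into two independent sets. -/
def IsBipartiteGraph (G : SimpleGraph V) : Prop :=
  ∃ A B : Set V, (∀ v, v ∈ A ∨ v ∈ B) ∧ A ∩ B = ∅ ∧ IsIndep G A ∧ IsIndep G B

/-- `G` is almost bipartite: it has exactly one odd cycle. -/
def AlmostBipartite (G : SimpleGraph V) : Prop := ∃! C : Set V, IsOddCycle G C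

/-- `G` is a König–Egerváry graph: `α(G) + μ(G) = |V(G)|`. -/
def IsKE {W : Type*} (G : SimpleGraph W) : Prop :=
  _root_.indepNum G + matchNum G = Nat.card W

namespace Aux
variable {G : SimpleGraph V}

/-- A finite set of edges forming a matching of `G`. -/
def MFin (G : SimpleGraph V) (E : Finset (Sym2 V)) : Prop :=
  (∀ e ∈ E, e ∈ G.edgeSet) ∧ ∀ e ∈ E, ∀ f ∈ E, ∀ v : V, v ∈ e → v ∈ f → e = f

lemma mem_edge_cases {e : Sym2 V} {v : V} (hv : v ∈ e) : ∃ w, e = s(v, w) := by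
  induction e with
  | _ x y =>
    rcases Sym2.mem_iff.mp hv with rfl | rfl
    · exact ⟨y, rfl⟩
    · exact ⟨x, Sym2.eq_swap⟩

/-- Build a subgraph from a matching edge set. -/
def toSub (G : SimpleGraph V) (E : Finset (Sym2 V)) (hE : MFin G E) : G.Subgraph where
  verts := {v | ∃ e ∈ E, v ∈ e}
  Adj a b := s(a, b) ∈ E
  adj_sub h := hE.1 _ h
  edge_vert {a b} h := ⟨s(a, b), h, Sym2.mem_mk_left a b⟩
  symm := ⟨fun a b h => by simpa only [Sym2.eq_swap] using h⟩

lemma toSub_isMatching (G : SimpleGraph V) (E : Finset (Sym2 V)) (hE : MFin G E) :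
    (toSub G E hE).IsMatching := by
  rintro v ⟨e, he, hv⟩
  obtain ⟨w, rfl⟩ := mem_edge_cases hv
  refine ⟨w, he, fun y hy => ?_⟩
  have := hE.2 _ hy _ he v (Sym2.mem_mk_left v y) (Sym2.mem_mk_left v w)
  exact (Sym2.congr_right.mp this)

lemma toSub_edgeSet (G : SimpleGraph V) (E : Finset (Sym2 V)) (hE : MFin G E) :
    (toSub G E hE).edgeSet = (E : Set (Sym2 V)) := by
  ext e
  induction e with
  | _ x y => simp [toSub, Subgraph.mem_edgeSet]

lemma MFin.card_le_of_max {M : G.Subgraph} (hM : IsMaxMatching G M) {E : Finset (Sym2 V)}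
    (hE : MFin G E) : E.card ≤ M.edgeSet.ncard := by
  have := hM.2 (toSub G E hE) (toSub_isMatching G E hE)
  rwa [toSub_edgeSet, Set.ncard_coe_finset] at this

lemma matching_unique_edge {M : G.Subgraph} (hM : M.IsMatching) {e f : Sym2 V} {v : V}
    (he : e ∈ M.edgeSet) (hf : f ∈ M.edgeSet) (hve : v ∈ e) (hvf : v ∈ f) : e = f := by
  obtain ⟨a, rfl⟩ := mem_edge_cases hve
  obtain ⟨b, rfl⟩ := mem_edge_cases hvf
  rw [Subgraph.mem_edgeSet] at he hf
  have hv : v ∈ M.verts := M.edge_vert he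
  obtain ⟨w, _, hw⟩ := hM hv
  rw [hw a he, hw b hf]

variable [Fintype V]

noncomputable def eFin (M : G.Subgraph) : Finset (Sym2 V) :=
  (Set.toFinite M.edgeSet).toFinset

lemma mem_eFin {M : G.Subgraph} {e : Sym2 V} : e ∈ eFin M ↔ e ∈ M.edgeSet := by
  simp [eFin]

lemma eFin_card (M : G.Subgraph) : (eFin M).card = M.edgeSet.ncard := by
  rw [eFin, ← Set.ncard_eq_toFinset_card _ (Set.toFinite M.edgeSet)]

lemma eFin_MFin {M : G.Subgraph} (hM : M.IsMatching) : MFin G (eFin M) := by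
  constructor
  · intro e he
    rw [mem_eFin] at he
    exact M.edgeSet_subset he
  · intro e he f hf v hve hvf
    rw [mem_eFin] at he hf
    exact matching_unique_edge hM he hf hve hvf


/-- Edges at (0-indexed) positions 1, 3, 5, ... of a walk. -/
def epick : {a c : V} → G.Walk a c → List (Sym2 V)
  | _, _, .nil => []
  | _, _, .cons _ .nil => []
  | _, _, .cons (v := b₁) _ (.cons (v := b₂) _ q) => s(b₁, b₂) :: epick q

/-- Edges at (0-indexed) positions 0, 2, 4, ... of a walk. -/
def opick : {a c : V} → G.Walk a c → List (Sym2 V)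
  | _, _, .nil => []
  | _, _, .cons (u := a) (v := b) _ q => s(a, b) :: epick q


@[simp] lemma epick_nil {a : V} : epick (G := G) (.nil (u := a)) = [] := rfl
@[simp] lemma epick_one {a b : V} (h : G.Adj a b) : epick (.cons h .nil) = [] := rfl
@[simp] lemma epick_cons_cons {a b₁ b₂ c : V} (h₁ : G.Adj a b₁) (h₂ : G.Adj b₁ b₂)
    (q : G.Walk b₂ c) : epick (.cons h₁ (.cons h₂ q)) = s(b₁, b₂) :: epick q := rfl
@[simp] lemma opick_nil {a : V} : opick (G := G) (.nil (u := a)) = [] := rfl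
@[simp] lemma opick_cons {a b c : V} (h : G.Adj a b) (q : G.Walk b c) :
    opick (.cons h q) = s(a, b) :: epick q := rfl

lemma epick_subset : ∀ {a c : V} (w : G.Walk a c), ∀ e ∈ epick w, e ∈ w.edges
  | _, _, .nil => by simp [epick]
  | _, _, .cons _ .nil => by simp [epick]
  | _, _, .cons (v := b₁) _ (.cons (v := b₂) _ q) => by
    intro e he
    rw [epick_cons_cons] at he
    rcases List.mem_cons.mp he with rfl | he
    · simp [Walk.edges_cons]
    · simp only [Walk.edges_cons, List.mem_cons]
      exact Or.inr (Or.inr (epick_subset q e he))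

lemma opick_subset : ∀ {a c : V} (w : G.Walk a c), ∀ e ∈ opick w, e ∈ w.edges
  | _, _, .nil => by simp [opick]
  | _, _, .cons _ q => by
    intro e he
    rw [opick_cons] at he
    rcases List.mem_cons.mp he with rfl | he
    · simp [Walk.edges_cons]
    · exact List.mem_cons.mpr (Or.inr (epick_subset q e he))

lemma epick_length : ∀ {a c : V} (w : G.Walk a c), (epick w).length = w.length / 2
  | _, _, .nil => by simp [epick]
  | _, _, .cons _ .nil => by simp [epick]
  | _, _, .cons (v := b₁) _ (.cons (v := b₂) _ q) => by
    rw [epick_cons_cons, List.length_cons, epick_length q, Walk.length_cons, Walk.length_cons]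
    omega

lemma opick_length : ∀ {a c : V} (w : G.Walk a c), (opick w).length = (w.length + 1) / 2
  | _, _, .nil => by simp [opick]
  | _, _, .cons _ q => by
    rw [opick_cons, List.length_cons, epick_length q, Walk.length_cons]
    omega

lemma epick_cov_tail : ∀ {a c : V} (w : G.Walk a c), ∀ e ∈ epick w, ∀ v ∈ e,
    v ∈ w.support.tail
  | _, _, .nil => by simp [epick]
  | _, _, .cons _ .nil => by simp [epick]
  | _, _, .cons (v := b₁) _ (.cons (v := b₂) _ q) => by
    intro e he v hv
    rw [epick_cons_cons] at he
    simp only [Walk.support_cons, List.tail_cons, List.mem_cons]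
    rcases List.mem_cons.mp he with rfl | he
    · rcases Sym2.mem_iff.mp hv with rfl | rfl
      · exact Or.inl rfl
      · exact Or.inr (Walk.start_mem_support q)
    · exact Or.inr (List.mem_of_mem_tail (epick_cov_tail q e he v hv))

lemma epick_cov_dropLast : ∀ {a c : V} (w : G.Walk a c), Odd w.length →
    ∀ e ∈ epick w, ∀ v ∈ e, v ∈ w.support.tail.dropLast
  | _, _, .nil => by simp [epick]
  | _, _, .cons _ .nil => by simp [epick]
  | _, _, .cons (v := b₁) _ (.cons (v := b₂) _ q) => by
    intro hodd e he v hv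
    obtain ⟨t, ht⟩ := hodd
    have hq : Odd q.length := by
      refine ⟨t - 1, ?_⟩
      simp only [Walk.length_cons] at ht
      omega
    have hqnil : q.support.tail ≠ [] := by
      cases q with
      | nil => simp at hq
      | cons h q => simp
    rw [epick_cons_cons] at he
    simp only [Walk.support_cons, List.tail_cons]
    rw [List.dropLast_cons_of_ne_nil (Walk.support_ne_nil q)]
    rcases List.mem_cons.mp he with rfl | he
    · rcases Sym2.mem_iff.mp hv with rfl | rfl
      · exact List.mem_cons_self
      · refine List.mem_cons_of_mem _ ?_
        rw [Walk.support_eq_cons q, List.dropLast_cons_of_ne_nil hqnil]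
        exact List.mem_cons_self
    · refine List.mem_cons_of_mem _ ?_
      have := epick_cov_dropLast q hq e he v hv
      rw [Walk.support_eq_cons q, List.dropLast_cons_of_ne_nil hqnil]
      exact List.mem_cons_of_mem _ this

lemma epick_surj : ∀ {a c : V} (w : G.Walk a c), Odd w.length →
    ∀ v ∈ w.support.tail.dropLast, ∃ e ∈ epick w, v ∈ e
  | _, _, .nil => by simp
  | _, _, .cons _ .nil => by simp [Walk.support_nil]
  | _, _, .cons (v := b₁) _ (.cons (v := b₂) _ q) => by
    intro hodd v hv
    obtain ⟨t, ht⟩ := hodd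
    have hq : Odd q.length := by
      refine ⟨t - 1, ?_⟩
      simp only [Walk.length_cons] at ht
      omega
    have hqnil : q.support.tail ≠ [] := by
      cases q with
      | nil => simp at hq
      | cons h q => simp
    simp only [Walk.support_cons, List.tail_cons] at hv
    rw [List.dropLast_cons_of_ne_nil (Walk.support_ne_nil q)] at hv
    rw [epick_cons_cons]
    rcases List.mem_cons.mp hv with rfl | hv
    · exact ⟨_, List.mem_cons_self, Sym2.mem_mk_left _ _⟩
    · rw [Walk.support_eq_cons q, List.dropLast_cons_of_ne_nil hqnil] at hv
      rcases List.mem_cons.mp hv with rfl | hv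
      · exact ⟨_, List.mem_cons_self, Sym2.mem_mk_right _ _⟩
      · obtain ⟨e, he, hve⟩ := epick_surj q hq v hv
        exact ⟨e, List.mem_cons_of_mem _ he, hve⟩

lemma epick_disj : ∀ {a c : V} (w : G.Walk a c), w.support.tail.Nodup →
    ∀ e ∈ epick w, ∀ f ∈ epick w, ∀ v : V, v ∈ e → v ∈ f → e = f
  | _, _, .nil => by simp [epick]
  | _, _, .cons _ .nil => by simp [epick]
  | _, _, .cons (v := b₁) _ (.cons (v := b₂) _ q) => by
    intro hnd e he f hf v hve hvf
    simp only [Walk.support_cons, List.tail_cons, List.nodup_cons] at hnd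
    obtain ⟨hb₁, hnd'⟩ := hnd
    have hndq : q.support.tail.Nodup := hnd'.sublist (List.tail_sublist _)
    have hb₂ : b₂ ∉ q.support.tail := by
      have := hnd'
      rw [Walk.support_eq_cons q, List.nodup_cons] at this
      exact this.1
    have key : ∀ g ∈ epick q, ∀ u : V, u ∈ g → u ∈ s(b₁, b₂) → False := by
      intro g hg u hug hus
      have ht := epick_cov_tail q g hg u hug
      rcases Sym2.mem_iff.mp hus with rfl | rfl
      · exact hb₁ (List.mem_of_mem_tail ht)
      · exact hb₂ ht
    rw [epick_cons_cons] at he hf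
    rcases List.mem_cons.mp he with rfl | he <;> rcases List.mem_cons.mp hf with rfl | hf
    · rfl
    · exact (key f hf v hvf hve).elim
    · exact (key e he v hve hvf).elim
    · exact epick_disj q hndq e he f hf v hve hvf

lemma epick_nodup : ∀ {a c : V} (w : G.Walk a c), w.support.tail.Nodup → (epick w).Nodup
  | _, _, .nil => by simp [epick]
  | _, _, .cons _ .nil => by simp [epick]
  | _, _, .cons (v := b₁) _ (.cons (v := b₂) _ q) => by
    intro hnd
    simp only [Walk.support_cons, List.tail_cons, List.nodup_cons] at hnd
    obtain ⟨hb₁, hnd'⟩ := hnd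
    have hndq : q.support.tail.Nodup := hnd'.sublist (List.tail_sublist _)
    rw [epick_cons_cons]
    refine List.nodup_cons.mpr ⟨?_, epick_nodup q hndq⟩
    intro hmem
    have := epick_cov_tail q _ hmem b₂ (Sym2.mem_mk_right _ _)
    rw [Walk.support_eq_cons q, List.nodup_cons] at hnd'
    exact hnd'.1 this

lemma epick_mem {M : G.Subgraph} : ∀ {a c : V} (w : G.Walk a c),
    Alternating G M w.edges → (∀ e ∈ w.edges.head?, e ∉ M.edgeSet) →
    ∀ e ∈ epick w, e ∈ M.edgeSet
  | _, _, .nil => by simp [epick]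
  | _, _, .cons _ .nil => by simp [epick]
  | _, _, .cons (v := b₁) _ (.cons (v := b₂) _ q) => by
    intro halt hhead e he
    rw [epick_cons_cons] at he
    simp only [Walk.edges_cons] at halt hhead
    have h1 := hhead _ rfl
    obtain ⟨h12, halt'⟩ := List.isChain_cons_cons.mp halt
    have h2 : s(b₁, b₂) ∈ M.edgeSet := by
      by_contra h2
      exact h1 (h12.mpr h2)
    rcases List.mem_cons.mp he with rfl | he
    · exact h2
    · refine epick_mem q (halt'.tail) ?_ e he
      intro f hf
      cases hq : q.edges with
      | nil => rw [hq] at hf; simp at hf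
      | cons f₀ rest =>
        rw [hq] at hf
        simp only [List.head?_cons, Option.mem_def, Option.some.injEq] at hf
        subst hf
        rw [hq] at halt'
        exact (List.isChain_cons_cons.mp halt').1.mp h2

lemma epick_nmem {M : G.Subgraph} : ∀ {a c : V} (w : G.Walk a c),
    Alternating G M w.edges → (∀ e ∈ w.edges.head?, e ∈ M.edgeSet) →
    ∀ e ∈ epick w, e ∉ M.edgeSet
  | _, _, .nil => by simp [epick]
  | _, _, .cons _ .nil => by simp [epick]
  | _, _, .cons (v := b₁) _ (.cons (v := b₂) _ q) => by
    intro halt hhead e he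
    rw [epick_cons_cons] at he
    simp only [Walk.edges_cons] at halt hhead
    have h1 := hhead _ rfl
    obtain ⟨h12, halt'⟩ := List.isChain_cons_cons.mp halt
    have h2 : s(b₁, b₂) ∉ M.edgeSet := h12.mp h1
    rcases List.mem_cons.mp he with rfl | he
    · exact h2
    · refine epick_nmem q (halt'.tail) ?_ e he
      intro f hf
      cases hq : q.edges with
      | nil => rw [hq] at hf; simp at hf
      | cons f₀ rest =>
        rw [hq] at hf
        simp only [List.head?_cons, Option.mem_def, Option.some.injEq] at hf
        subst hf
        rw [hq] at halt'
        by_contra hfM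
        exact h2 ((List.isChain_cons_cons.mp halt').1.mpr hfM)


/-! ### list helpers -/

lemma getLast_eq_of_eq_cons {α : Type*} {l t : List α} {a : α} (hl : l = a :: t)
    (ht : t ≠ []) (h : l ≠ []) : l.getLast h = t.getLast ht := by
  subst hl
  exact List.getLast_cons ht

lemma getLast_congr {α : Type*} {l l' : List α} (h : l = l') (hne : l ≠ []) (hne' : l' ≠ []) :
    l.getLast hne = l'.getLast hne' := by subst h; rfl

lemma mem_dropLast_iff {α : Type*} : ∀ {l : List α} (hnd : l.Nodup) (hne : l ≠ []) {x : α},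
    x ∈ l.dropLast ↔ x ∈ l ∧ x ≠ l.getLast hne := by
  intro l
  induction l with
  | nil => intro _ hne; exact absurd rfl hne
  | cons a l ih =>
    intro hnd hne x
    cases l with
    | nil => simp
    | cons b l' =>
      rw [List.dropLast_cons₂, List.getLast_cons (List.cons_ne_nil _ _)]
      have hnd' : (b :: l').Nodup := (List.nodup_cons.mp hnd).2
      have ha : a ∉ b :: l' := (List.nodup_cons.mp hnd).1
      rw [List.mem_cons, List.mem_cons, ih hnd' (List.cons_ne_nil _ _)]
      constructor
      · rintro (rfl | ⟨h1, h2⟩)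
        · exact ⟨Or.inl rfl, fun hc => ha (hc ▸ List.getLast_mem _)⟩
        · exact ⟨Or.inr h1, h2⟩
      · rintro ⟨(rfl | h1), h2⟩
        · exact Or.inl rfl
        · exact Or.inr ⟨h1, h2⟩

/-! ### closed walk support facts -/

lemma closed_tail_ne_nil {b : V} (w : G.Walk b b) (h : ¬ w.Nil) : w.support.tail ≠ [] := by
  cases w with
  | nil => exact absurd Walk.nil_nil h
  | cons h q => simp [Walk.support_cons]

lemma closed_tail_getLast {b : V} (w : G.Walk b b) (h : w.support.tail ≠ []) :
    w.support.tail.getLast h = b := by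
  have h1 := Walk.getLast_support w
  rw [getLast_eq_of_eq_cons (Walk.support_eq_cons w) h _] at h1
  exact h1

lemma closed_mem_tail {b : V} (w : G.Walk b b) (hn : ¬ w.Nil) {v : V} :
    v ∈ w.support ↔ v ∈ w.support.tail := by
  constructor
  · intro hv
    by_cases hvb : v = b
    · subst hvb
      have h6 := List.getLast_mem (closed_tail_ne_nil w hn)
      rw [closed_tail_getLast w (closed_tail_ne_nil w hn)] at h6
      exact h6
    · have h2 : v ∈ b :: w.support.tail := Walk.support_eq_cons w ▸ hv
      rcases List.mem_cons.mp h2 with h3 | h3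
      · exact absurd h3 hvb
      · exact h3
  · exact List.mem_of_mem_tail

lemma length_rotate [DecidableEq V] {b u : V} (w : G.Walk b b) (h : u ∈ w.support) :
    (w.rotate u h).length = w.length := by
  have h1 := congrArg Walk.length (w.take_spec h)
  rw [Walk.length_append] at h1
  rw [Walk.rotate, Walk.length_append]
  omega

lemma rotate_not_nil [DecidableEq V] {b u : V} (w : G.Walk b b) (h : u ∈ w.support)
    (hn : ¬ w.Nil) : ¬ (w.rotate u h).Nil := by
  rw [Walk.nil_iff_length_eq, length_rotate, ← Walk.nil_iff_length_eq]
  exact hn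

lemma mem_support_rotate [DecidableEq V] {b u : V} (w : G.Walk b b) (h : u ∈ w.support)
    (hn : ¬ w.Nil) {v : V} : v ∈ (w.rotate u h).support ↔ v ∈ w.support := by
  rw [closed_mem_tail _ (rotate_not_nil w h hn), closed_mem_tail _ hn]
  exact (Walk.support_rotate w u h).mem_iff

/-! ### the vertex set of a cycle -/

lemma cycle_support_ncard {b : V} {w : G.Walk b b} (hw : w.IsCycle) {C : Set V}
    (hsup : ∀ v, v ∈ w.support ↔ v ∈ C) : C.ncard = w.length := by
  classical
  have hset : C = ↑(w.support.tail.toFinset) := by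
    ext v
    rw [← hsup v, closed_mem_tail w hw.not_nil]
    simp
  rw [hset, Set.ncard_coe_finset, List.toFinset_card_of_nodup hw.support_nodup,
    List.length_tail, Walk.length_support]
  omega

/-! ### arcs of a cycle -/

lemma arc_facts [DecidableEq V] {x y : V} {w : G.Walk x x} (hw : w.IsCycle)
    (hy : y ∈ w.support) (hxy : y ≠ x) :
    (w.takeUntil y hy).IsPath ∧ (w.dropUntil y hy).IsPath ∧
    (w.takeUntil y hy).length + (w.dropUntil y hy).length = w.length ∧
    (∀ v ∈ (w.takeUntil y hy).support, v ∈ (w.dropUntil y hy).support → v = x ∨ v = y) := by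
  set t := w.takeUntil y hy with ht
  set d := w.dropUntil y hy with hd
  have hspec : t.append d = w := w.take_spec hy
  have hlen : t.length + d.length = w.length := by
    have := congrArg Walk.length hspec
    rwa [Walk.length_append] at this
  have hsupp : t.support ++ d.support.tail = w.support := by
    have := congrArg Walk.support hspec
    rwa [Walk.support_append] at this
  have hT : t.support.tail ++ d.support.tail = w.support.tail := by
    have e1 : x :: (t.support.tail ++ d.support.tail) = x :: w.support.tail := by
      calc x :: (t.support.tail ++ d.support.tail)
          = (x :: t.support.tail) ++ d.support.tail := by rw [List.cons_append]
        _ = t.support ++ d.support.tail := by rw [← Walk.support_eq_cons]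
        _ = w.support := hsupp
        _ = x :: w.support.tail := Walk.support_eq_cons w
    exact (List.cons.injEq _ _ _ _ ▸ e1).2
  have hnodup := hw.support_nodup
  rw [← hT, List.nodup_append'] at hnodup
  obtain ⟨hnt, hnd, hdisj⟩ := hnodup
  have hdnil : d.support.tail ≠ [] := by
    intro hcon
    have h2 : d.support = [y] := by rw [Walk.support_eq_cons d, hcon]
    have h1 := Walk.getLast_support d
    rw [getLast_congr h2 _ (by simp)] at h1
    simp at h1
    exact hxy h1
  have hwne : w.support.tail ≠ [] := closed_tail_ne_nil w hw.not_nil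
  have hxd : x ∈ d.support.tail := by
    have h5 : w.support.tail.getLast hwne = d.support.tail.getLast hdnil :=
      (getLast_congr hT.symm hwne (by simp [hdnil])).trans (List.getLast_append_of_ne_nil _ hdnil)
    have h7 : d.support.tail.getLast hdnil = x :=
      h5.symm.trans (closed_tail_getLast w hwne)
    have h6 := List.getLast_mem hdnil
    rw [h7] at h6
    exact h6
  have hxt : x ∉ t.support.tail := fun hc => hdisj hc hxd
  have htpath : t.IsPath := by
    refine Walk.IsPath.mk' ?_
    rw [Walk.support_eq_cons t]
    exact List.nodup_cons.mpr ⟨hxt, hnt⟩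
  have htnil : t.support.tail ≠ [] := by
    intro hcon
    have h2 : t.support = [x] := by rw [Walk.support_eq_cons t, hcon]
    have h1 := Walk.getLast_support t
    rw [getLast_congr h2 _ (by simp)] at h1
    simp at h1
    exact hxy h1.symm
  have hyt : y ∈ t.support.tail := by
    have h5' : t.support.tail.getLast htnil = y :=
      (getLast_eq_of_eq_cons (Walk.support_eq_cons t) htnil _).symm.trans
        (Walk.getLast_support t)
    have h6 := List.getLast_mem htnil
    rw [h5'] at h6
    exact h6
  have hyd : y ∉ d.support.tail := fun hc => hdisj hyt hc
  have hdpath : d.IsPath := by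
    refine Walk.IsPath.mk' ?_
    rw [Walk.support_eq_cons d]
    exact List.nodup_cons.mpr ⟨hyd, hnd⟩
  refine ⟨htpath, hdpath, hlen, ?_⟩
  intro v hvt hvd
  have hvt' : v ∈ x :: t.support.tail := Walk.support_eq_cons t ▸ hvt
  have hvd' : v ∈ y :: d.support.tail := Walk.support_eq_cons d ▸ hvd
  rcases List.mem_cons.mp hvt' with rfl | hvt''
  · exact Or.inl rfl
  rcases List.mem_cons.mp hvd' with rfl | hvd''
  · exact Or.inr rfl
  exact (hdisj hvt'' hvd'').elim

/-! ### an edge joining the endpoints of a path -/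

lemma edge_ends_len1 : ∀ {x y : V} (p : G.Walk x y), p.IsPath → x ≠ y →
    s(x, y) ∈ p.edges → p.length = 1
  | _, _, .nil => by simp
  | x, y, .cons (v := b) h q => by
    intro hp hxy he
    rw [Walk.edges_cons] at he
    rcases List.mem_cons.mp he with heq | hmem
    · have hb : b = y := by
        rcases Sym2.eq_iff.mp heq with ⟨-, hyb⟩ | ⟨h1, h2⟩
        · exact hyb.symm
        · exact absurd h2 hxy.symm
      subst hb
      have hq : q.IsPath := hp.of_cons
      rw [(Walk.isPath_iff_eq_nil).mp hq]
      rfl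
    · have hx : x ∈ q.support := Walk.fst_mem_support_of_mem_edges q hmem
      rw [Walk.cons_isPath_iff] at hp
      exact absurd hx hp.2

/-! ### gluing two paths into a cycle -/

lemma append_cycle {x y : V} (hxy : x ≠ y) (p : G.Walk x y) (q : G.Walk y x)
    (hp : p.IsPath) (hq : q.IsPath)
    (hint : ∀ v ∈ p.support, v ∈ q.support → v = x ∨ v = y)
    (hlen : 2 ≤ p.length ∨ 2 ≤ q.length) : (p.append q).IsCycle := by
  have hedge : ∀ e, e ∈ p.edges → e ∈ q.edges → False := by
    intro e hep heq
    induction e with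
    | _ a b =>
      have hab : a ≠ b := by
        have := p.edges_subset_edgeSet hep
        rw [SimpleGraph.mem_edgeSet] at this
        exact this.ne
      have ha1 : a ∈ p.support := Walk.fst_mem_support_of_mem_edges p hep
      have hb1 : b ∈ p.support := Walk.snd_mem_support_of_mem_edges p hep
      have ha2 : a ∈ q.support := Walk.fst_mem_support_of_mem_edges q heq
      have hb2 : b ∈ q.support := Walk.snd_mem_support_of_mem_edges q heq
      have hae := hint a ha1 ha2
      have hbe := hint b hb1 hb2
      have hsxy : s(a, b) = s(x, y) := by
        rcases hae with rfl | rfl <;> rcases hbe with rfl | rfl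
        · exact absurd rfl hab
        · rfl
        · exact Sym2.eq_swap
        · exact absurd rfl hab
      have h1 : p.length = 1 := edge_ends_len1 p hp hxy (hsxy ▸ hep)
      have h2 : q.length = 1 := by
        refine edge_ends_len1 q hq (Ne.symm hxy) ?_
        have : s(a, b) = s(y, x) := hsxy.trans Sym2.eq_swap
        exact this ▸ heq
      omega
  refine ⟨⟨⟨?_⟩, ?_⟩, ?_⟩
  · rw [Walk.edges_append, List.nodup_append']
    exact ⟨hp.edges_nodup, hq.edges_nodup, fun e he1 he2 => hedge e he1 he2⟩
  · intro hcon
    have := congrArg Walk.length hcon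
    rw [Walk.length_append] at this
    simp only [Walk.length_nil] at this
    rcases hlen with hl | hl <;> omega
  · rw [Walk.tail_support_append, List.nodup_append']
    refine ⟨?_, ?_, ?_⟩
    · exact hp.support_nodup.sublist (List.tail_sublist _)
    · exact hq.support_nodup.sublist (List.tail_sublist _)
    · intro v hv1 hv2
      have hv1' : v ∈ p.support := List.mem_of_mem_tail hv1
      have hv2' : v ∈ q.support := List.mem_of_mem_tail hv2
      rcases hint v hv1' hv2' with rfl | rfl
      · have : v ∉ p.support.tail := by
          have := hp.support_nodup
          rw [Walk.support_eq_cons p, List.nodup_cons] at this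
          exact this.1
        exact this hv1
      · have : v ∉ q.support.tail := by
          have := hq.support_nodup
          rw [Walk.support_eq_cons q, List.nodup_cons] at this
          exact this.1
        exact this hv2

/-! ### reach facts -/

lemma subset_reach (h : RDisjoint G) {C : Set V} (hC : IsOddCycle G C) : C ⊆ reach G C := by
  obtain ⟨z, hz⟩ := h.2.1 C hC
  obtain ⟨F, hF, hzF⟩ := hz
  obtain ⟨M, hM, b, r, w, p, hbl, hst, hsup, hmeet, hFeq⟩ := hF
  intro v hv
  refine Set.mem_sUnion.mpr ⟨F, ⟨M, hM, b, r, w, p, hbl, hst, hsup, hmeet, hFeq⟩, ?_⟩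
  rw [hFeq]
  exact Or.inl ((hsup v).mpr hv)

lemma odd_cycles_eq (h : RDisjoint G) {C C' : Set V} (hC : IsOddCycle G C)
    (hC' : IsOddCycle G C') {v : V} (hv : v ∈ C) (hv' : v ∈ C') : C = C' := by
  by_contra hne
  have hd := h.2.2 C C' hC hC' hne
  have : v ∈ reach G C ∩ reach G C' :=
    ⟨subset_reach h hC hv, subset_reach h hC' hv'⟩
  rw [hd] at this
  exact this

/-! ### no ears -/

lemma no_ear (h : RDisjoint G) {C : Set V} (hC : IsOddCycle G C) {x y : V}
    (hx : x ∈ C) (hy : y ∈ C) (hxy : x ≠ y) (P : G.Walk x y) (hP : P.IsPath)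
    (hlen : 2 ≤ P.length) (hPint : ∀ v ∈ P.support, v ∈ C → v = x ∨ v = y) : False := by
  classical
  obtain ⟨u₀, w₀, hw₀, hodd₀, hsup₀⟩ := hC
  have hxw : x ∈ w₀.support := (hsup₀ x).mpr hx
  set wx := w₀.rotate x hxw with hwx
  have hwxc : wx.IsCycle := hw₀.rotate hxw
  have hwxlen : wx.length = w₀.length := length_rotate w₀ hxw
  have hwxsup : ∀ v, v ∈ wx.support ↔ v ∈ C := by
    intro v
    rw [mem_support_rotate w₀ hxw hw₀.not_nil]
    exact hsup₀ v
  have hywx : y ∈ wx.support := (hwxsup y).mpr hy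
  obtain ⟨htpath, hdpath, harclen, harcint⟩ := arc_facts hwxc hywx (Ne.symm hxy)
  set t := wx.takeUntil y hywx with ht
  set d := wx.dropUntil y hywx with hd
  -- the second vertex of P
  obtain ⟨z, hzP, hzx, hzy⟩ : ∃ z, z ∈ P.support ∧ z ≠ x ∧ z ≠ y := by
    cases P with
    | nil => simp at hlen
    | @cons a b c hab q =>
      refine ⟨b, by simp [Walk.support_cons, Walk.start_mem_support], ?_, ?_⟩
      · intro hcon
        subst hcon
        rw [Walk.cons_isPath_iff] at hP
        exact hP.2 q.start_mem_support
      · intro hcon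
        subst hcon
        rw [Walk.cons_isPath_iff] at hP
        have : q = Walk.nil := (Walk.isPath_iff_eq_nil).mp hP.1
        subst this
        simp at hlen
  have hzC : z ∉ C := by
    intro hzC
    rcases hPint z hzP hzC with h1 | h1
    · exact hzx h1
    · exact hzy h1
  have hparity : Odd (P.length + d.length) ∨ Odd (t.length + P.length) := by
    have hoddwx : Odd wx.length := hwxlen ▸ hodd₀
    obtain ⟨a, ha⟩ := hoddwx
    rcases Nat.even_or_odd (P.length + d.length) with hev | hodd
    · obtain ⟨c, hc⟩ := hev
      exact Or.inr ⟨a + P.length - c, by omega⟩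
    · exact Or.inl hodd
  have hcontra : ∀ (Z : G.Walk x x), Z.IsCycle → Odd Z.length →
      (∀ v, v ∈ Z.support → v ∈ C ∨ v ∈ P.support) → z ∈ Z.support → False := by
    intro Z hZc hZodd hZsub hzZ
    have hZodd' : IsOddCycle G {v | v ∈ Z.support} := ⟨x, Z, hZc, hZodd, fun _ => Iff.rfl⟩
    have hCeq : C = {v | v ∈ Z.support} :=
      odd_cycles_eq h ⟨u₀, w₀, hw₀, hodd₀, hsup₀⟩ hZodd' hx Z.start_mem_support
    exact hzC (hCeq ▸ hzZ)
  rcases hparity with hodd1 | hodd2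
  · -- use P.append d
    refine hcontra (P.append d) ?_ ?_ ?_ ?_
    · refine append_cycle hxy P d hP hdpath ?_ (Or.inl hlen)
      intro v hvP hvd
      have hvC : v ∈ C := by
        rw [← hwxsup v]
        exact wx.support_dropUntil_subset hywx hvd
      exact hPint v hvP hvC
    · rw [Walk.length_append]
      exact hodd1
    · intro v hv
      rcases (Walk.mem_support_append_iff _ _).mp hv with hv | hv
      · exact Or.inr hv
      · exact Or.inl ((hwxsup v).mp (wx.support_dropUntil_subset hywx hv))
    · exact (Walk.mem_support_append_iff _ _).mpr (Or.inl hzP)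
  · -- use t.append P.reverse
    refine hcontra (t.append P.reverse) ?_ ?_ ?_ ?_
    · refine append_cycle hxy t P.reverse htpath hP.reverse ?_ ?_
      · intro v hvt hvP
        rw [Walk.support_reverse, List.mem_reverse] at hvP
        have hvC : v ∈ C := by
          rw [← hwxsup v]
          exact wx.support_takeUntil_subset hywx hvt
        rcases hPint v hvP hvC with h1 | h1
        · exact Or.inl h1
        · exact Or.inr h1
      · right
        rw [Walk.length_reverse]
        exact hlen
    · rw [Walk.length_append, Walk.length_reverse]
      exact hodd2
    · intro v hv
      rcases (Walk.mem_support_append_iff _ _).mp hv with hv | hv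
      · exact Or.inl ((hwxsup v).mp (wx.support_takeUntil_subset hywx hv))
      · rw [Walk.support_reverse, List.mem_reverse] at hv
        exact Or.inr hv
    · refine (Walk.mem_support_append_iff _ _).mpr (Or.inr ?_)
      rw [Walk.support_reverse, List.mem_reverse]
      exact hzP


/-- Attachment set of an outside vertex: cycle vertices reachable avoiding `C`. -/
def att (G : SimpleGraph V) (C : Set V) (x : V) : Set V :=
  {u | u ∈ C ∧ ∃ W : G.Walk x u, ∀ v ∈ W.support, v ∈ C → v = u}

lemma att_mem_C {C : Set V} {x u : V} (h : u ∈ att G C x) : u ∈ C := h.1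

lemma adj_att {C : Set V} {x u : V} (hadj : G.Adj u x) (hu : u ∈ C) (hx : x ∉ C) :
    u ∈ att G C x := by
  refine ⟨hu, Walk.cons hadj.symm Walk.nil, ?_⟩
  intro v hv hvC
  simp only [Walk.support_cons, Walk.support_nil, List.mem_cons, List.mem_singleton] at hv
  rcases hv with rfl | rfl | h
  · exact absurd hvC hx
  · rfl
  · exact absurd h List.not_mem_nil

lemma att_step {C : Set V} {x y : V} (hadj : G.Adj x y) (hx : x ∉ C) (hy : y ∉ C) :
    att G C x ⊆ att G C y := by
  rintro u ⟨hu, W, hW⟩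
  refine ⟨hu, Walk.cons hadj.symm W, ?_⟩
  intro v hv hvC
  rw [Walk.support_cons, List.mem_cons] at hv
  rcases hv with rfl | hv
  · exact absurd hvC hy
  · exact hW v hv hvC

lemma att_eq_of_adj {C : Set V} {x y : V} (hadj : G.Adj x y) (hx : x ∉ C) (hy : y ∉ C) :
    att G C x = att G C y :=
  Set.Subset.antisymm (att_step hadj hx hy) (att_step hadj.symm hy hx)

/-- Extract an outside neighbor of the attachment point, connected to `x` outside `C`. -/
lemma att_extract {C : Set V} {u : V} (hu : u ∈ C) :
    ∀ {x : V} (W : G.Walk x u), x ∉ C → (∀ v ∈ W.support, v ∈ C → v = u) →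
    ∃ (y : V), y ∉ C ∧ G.Adj y u ∧ ∃ Q : G.Walk x y, ∀ v ∈ Q.support, v ∉ C
  | x, .nil => by
    intro hx _
    exact absurd hu hx
  | x, .cons (v := w₁) h W' => by
    intro hx hsup
    by_cases hw₁ : w₁ ∈ C
    · have : w₁ = u := hsup w₁ (by simp [Walk.support_cons]) hw₁
      subst this
      refine ⟨x, hx, h, Walk.nil, ?_⟩
      intro v hv
      simp only [Walk.support_nil, List.mem_singleton] at hv
      subst hv
      exact hx
    · have hsup' : ∀ v ∈ W'.support, v ∈ C → v = u := by
        intro v hv hvC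
        exact hsup v (by rw [Walk.support_cons]; exact List.mem_cons_of_mem _ hv) hvC
      obtain ⟨y, hy, hadj, Q, hQ⟩ := att_extract hu W' hw₁ hsup'
      refine ⟨y, hy, hadj, Walk.cons h Q, ?_⟩
      intro v hv
      rw [Walk.support_cons, List.mem_cons] at hv
      rcases hv with rfl | hv
      · exact hx
      · exact hQ v hv

lemma att_unique {C : Set V} (hRD : RDisjoint G) (hC : IsOddCycle G C) {x u u' : V}
    (hu : u ∈ att G C x) (hu' : u' ∈ att G C x) (hx : x ∉ C) : u = u' := by
  classical
  by_contra hne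
  obtain ⟨huC, W, hW⟩ := hu
  obtain ⟨huC', W', hW'⟩ := hu'
  obtain ⟨y, hy, hadj, Q, hQ⟩ := att_extract huC W hx hW
  obtain ⟨y', hy', hadj', Q', hQ'⟩ := att_extract huC' W' hx hW'
  -- a walk from y to y' staying outside C
  have hR : ∃ R : G.Walk y y', ∀ v ∈ R.support, v ∉ C := by
    refine ⟨Q.reverse.append Q', ?_⟩
    intro v hv
    rcases (Walk.mem_support_append_iff _ _).mp hv with hv | hv
    · rw [Walk.support_reverse, List.mem_reverse] at hv
      exact hQ v hv
    · exact hQ' v hv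
  obtain ⟨R, hRout⟩ := hR
  -- make it a path
  set R' := R.toPath with hR'
  have hR'out : ∀ v ∈ (R' : G.Walk y y').support, v ∉ C := by
    intro v hv
    exact hRout v (R.support_toPath_subset hv)
  -- full path from u to u'
  have hfull : ∃ P : G.Walk u u', P.IsPath ∧ 2 ≤ P.length ∧
      ∀ v ∈ P.support, v ∈ C → v = u ∨ v = u' := by
    refine ⟨Walk.cons hadj.symm ((R' : G.Walk y y').concat hadj'), ?_, ?_, ?_⟩
    · rw [Walk.isPath_def, Walk.support_cons, Walk.support_concat]
      rw [List.nodup_cons, List.nodup_append']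
      refine ⟨?_, R'.2.support_nodup, by simp, ?_⟩
      · intro hmem
        rcases List.mem_append.mp hmem with hmem | hmem
        · exact hR'out u hmem huC
        · simp only [List.mem_singleton] at hmem
          exact hne hmem
      · intro a ha hb
        simp only [List.mem_singleton] at hb
        exact hR'out a ha (hb ▸ huC')
    · rw [Walk.length_cons, Walk.length_concat]
      omega
    · intro v hv hvC
      rw [Walk.support_cons, List.mem_cons] at hv
      rcases hv with rfl | hv
      · exact Or.inl rfl
      · rw [Walk.support_concat, List.mem_append] at hv
        rcases hv with hv | hv
        · exact absurd hvC (hR'out v hv)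
        · simp only [List.mem_singleton] at hv
          exact Or.inr hv
  obtain ⟨P, hP, hlen, hint⟩ := hfull
  exact no_ear hRD hC huC huC' hne P hP hlen hint

/-! ### edge classification -/

def eInt (C : Set V) (e : Sym2 V) : Prop := ∀ v ∈ e, v ∈ C

def eReg (G : SimpleGraph V) (C : Set V) (u : V) (e : Sym2 V) : Prop :=
  ∃ x ∈ e, x ∉ C ∧ u ∈ att G C x

def eOut (G : SimpleGraph V) (C : Set V) (e : Sym2 V) : Prop := ∃ u, eReg G C u e

lemma reg_vert {C : Set V} (hRD : RDisjoint G) (hC : IsOddCycle G C) {u : V} {e : Sym2 V} (he : e ∈ G.edgeSet)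
    (hreg : eReg G C u e) : ∀ v ∈ e, (v ∈ C → v = u) ∧ (v ∉ C → u ∈ att G C v) := by
  obtain ⟨x, hxe, hxC, hatt⟩ := hreg
  intro v hv
  induction e with
  | _ a b =>
    rw [SimpleGraph.mem_edgeSet] at he
    have hcases : (x = a ∧ v = b) ∨ (x = b ∧ v = a) ∨ v = x := by
      rcases Sym2.mem_iff.mp hxe with rfl | rfl <;> rcases Sym2.mem_iff.mp hv with rfl | rfl
      · exact Or.inr (Or.inr rfl)
      · exact Or.inl ⟨rfl, rfl⟩
      · exact Or.inr (Or.inl ⟨rfl, rfl⟩)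
      · exact Or.inr (Or.inr rfl)
    have key : ∀ w : V, G.Adj x w → (w ∈ C → w = u) ∧ (w ∉ C → u ∈ att G C w) := by
      intro w hadj
      constructor
      · intro hwC
        have h1 : w ∈ att G C x := adj_att hadj.symm hwC hxC
        exact att_unique hRD hC h1 hatt hxC
      · intro hwC
        exact att_step hadj hxC hwC hatt
    rcases hcases with ⟨rfl, rfl⟩ | ⟨rfl, rfl⟩ | rfl
    · exact key v he
    · exact key v he.symm
    · exact ⟨fun hvC => absurd hvC hxC, fun _ => hatt⟩

lemma reg_unique {C : Set V} (hRD : RDisjoint G) (hC : IsOddCycle G C) {u u' : V} {e : Sym2 V} (he : e ∈ G.edgeSet)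
    (h1 : eReg G C u e) (h2 : eReg G C u' e) : u = u' := by
  obtain ⟨x, hxe, hxC, hatt⟩ := h2
  have := (reg_vert hRD hC he h1 x hxe).2 hxC
  exact att_unique hRD hC this hatt hxC

lemma z_vert {C : Set V} {e : Sym2 V} (he : e ∈ G.edgeSet)
    (hni : ¬ eInt C e) (hno : ¬ eOut G C e) : ∀ v ∈ e, v ∉ C ∧ att G C v = ∅ := by
  obtain ⟨x, hxe, hxC⟩ : ∃ x ∈ e, x ∉ C := by
    by_contra hcon
    push_neg at hcon
    exact hni hcon
  have hxatt : att G C x = ∅ := by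
    by_contra hne
    obtain ⟨u, hu⟩ := Set.nonempty_iff_ne_empty.mpr hne
    exact hno ⟨u, x, hxe, hxC, hu⟩
  intro v hv
  induction e with
  | _ a b =>
    rw [SimpleGraph.mem_edgeSet] at he
    have hcases : v = x ∨ G.Adj x v := by
      rcases Sym2.mem_iff.mp hxe with rfl | rfl <;> rcases Sym2.mem_iff.mp hv with rfl | rfl
      · exact Or.inl rfl
      · exact Or.inr he
      · exact Or.inr he.symm
      · exact Or.inl rfl
    rcases hcases with rfl | hadj
    · exact ⟨hxC, hxatt⟩
    · have hvC : v ∉ C := by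
        intro hvC
        have : v ∈ att G C x := adj_att hadj.symm hvC hxC
        rw [hxatt] at this
        exact this
      refine ⟨hvC, ?_⟩
      rw [← att_eq_of_adj hadj hxC hvC]
      exact hxatt


/-! ### small Sym2 helpers -/

lemma sym2_exists_mem (e : Sym2 V) : ∃ v, v ∈ e := by
  induction e with
  | _ a b => exact ⟨a, Sym2.mem_mk_left a b⟩

lemma exists_mem_ne (e : Sym2 V) (he : e ∈ G.edgeSet) (b : V) : ∃ v ∈ e, v ≠ b := by
  induction e with
  | _ x y =>
    rw [SimpleGraph.mem_edgeSet] at he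
    by_cases hx : x = b
    · subst hx
      exact ⟨y, Sym2.mem_mk_right _ _, fun hc => he.ne hc.symm⟩
    · exact ⟨x, Sym2.mem_mk_left _ _, hx⟩

lemma mem_verts_of_mem_edge {M : G.Subgraph} {e : Sym2 V} {v : V}
    (he : e ∈ M.edgeSet) (hv : v ∈ e) : v ∈ M.verts := by
  induction e with
  | _ a b =>
    rw [Subgraph.mem_edgeSet] at he
    rcases Sym2.mem_iff.mp hv with rfl | rfl
    · exact M.edge_vert he
    · exact M.edge_vert he.symm

lemma mem_support_of_mem_edges {a c : V} {w : G.Walk a c} {e : Sym2 V} {v : V}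
    (he : e ∈ w.edges) (hv : v ∈ e) : v ∈ w.support := by
  induction e with
  | _ x y =>
    rcases Sym2.mem_iff.mp hv with rfl | rfl
    · exact Walk.fst_mem_support_of_mem_edges w he
    · exact Walk.snd_mem_support_of_mem_edges w he

/-! ### more opick/epick lemmas -/

lemma opick_mem {M : G.Subgraph} : ∀ {a c : V} (w : G.Walk a c),
    Alternating G M w.edges → (∀ e ∈ w.edges.head?, e ∈ M.edgeSet) →
    ∀ e ∈ opick w, e ∈ M.edgeSet
  | _, _, .nil => by simp
  | _, _, .cons h q => by
    intro halt hhead e he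
    rw [opick_cons] at he
    rw [Walk.edges_cons] at halt hhead
    have h0 := hhead _ rfl
    rcases List.mem_cons.mp he with rfl | he
    · exact h0
    · refine epick_mem q halt.tail ?_ e he
      intro f hf
      cases hq : q.edges with
      | nil => rw [hq] at hf; simp at hf
      | cons f₀ rest =>
        rw [hq] at hf
        simp only [List.head?_cons, Option.mem_def, Option.some.injEq] at hf
        subst hf
        rw [hq] at halt
        exact (List.isChain_cons_cons.mp halt).1.mp h0

lemma opick_nodup : ∀ {a c : V} (w : G.Walk a c), w.support.Nodup → (opick w).Nodup
  | _, _, .nil => by simp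
  | _, _, .cons h q => by
    intro hnd
    rw [Walk.support_cons, List.nodup_cons] at hnd
    rw [opick_cons, List.nodup_cons]
    constructor
    · intro hmem
      have := epick_cov_tail q _ hmem _ (Sym2.mem_mk_left _ _)
      exact hnd.1 (List.mem_of_mem_tail this)
    · exact epick_nodup q (hnd.2.sublist (List.tail_sublist _))

lemma opick_surj : ∀ {a c : V} (w : G.Walk a c), Even w.length →
    ∀ v ∈ w.support.dropLast, ∃ e ∈ opick w, v ∈ e
  | _, _, .nil => by simp
  | _, _, .cons (v := b) h q => by
    intro heven v hv
    have hqodd : Odd q.length := by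
      obtain ⟨t, ht⟩ := heven
      rw [Walk.length_cons] at ht
      exact ⟨t - 1, by omega⟩
    have hqnil : q.support.tail ≠ [] := by
      cases q with
      | nil => simp at hqodd
      | cons h q => simp
    rw [Walk.support_cons, List.dropLast_cons_of_ne_nil (Walk.support_ne_nil q)] at hv
    rw [opick_cons]
    rcases List.mem_cons.mp hv with rfl | hv
    · exact ⟨_, List.mem_cons_self, Sym2.mem_mk_left _ _⟩
    · rw [Walk.support_eq_cons q, List.dropLast_cons_of_ne_nil hqnil] at hv
      rcases List.mem_cons.mp hv with rfl | hv
      · exact ⟨_, List.mem_cons_self, Sym2.mem_mk_right _ _⟩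
      · obtain ⟨e, he, hve⟩ := epick_surj q hqodd v hv
        exact ⟨e, List.mem_cons_of_mem _ he, hve⟩

/-! ### vertex-count bound for internal matchings -/

lemma int_bound [DecidableEq V] : ∀ (E : Finset (Sym2 V)) (D : Finset V),
    (∀ e ∈ E, e ∈ G.edgeSet) →
    (∀ e ∈ E, ∀ f ∈ E, ∀ v : V, v ∈ e → v ∈ f → e = f) →
    (∀ e ∈ E, ∀ v ∈ e, v ∈ D) → 2 * E.card ≤ D.card := by
  intro E
  induction E using Finset.induction with
  | empty => intro D _ _ _; simp
  | @insert a E' ha ih =>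
    intro D hG hdisj hD
    obtain ⟨⟨x, y⟩, rfl⟩ := Quot.exists_rep a
    have haG : s(x, y) ∈ G.edgeSet := hG _ (Finset.mem_insert_self _ _)
    have hxy : x ≠ y := by
      rw [SimpleGraph.mem_edgeSet] at haG
      exact haG.ne
    have hxD : x ∈ D := hD _ (Finset.mem_insert_self _ _) x (Sym2.mem_mk_left _ _)
    have hyD : y ∈ D := hD _ (Finset.mem_insert_self _ _) y (Sym2.mem_mk_right _ _)
    have hstep := ih ((D.erase x).erase y)
      (fun e he => hG e (Finset.mem_insert_of_mem he))
      (fun e he f hf => hdisj e (Finset.mem_insert_of_mem he) f (Finset.mem_insert_of_mem hf))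
      ?_
    · have hyx : y ∈ D.erase x := Finset.mem_erase.mpr ⟨hxy.symm, hyD⟩
      have hc1 : ((D.erase x).erase y).card = (D.erase x).card - 1 :=
        Finset.card_erase_of_mem hyx
      have hc2 : (D.erase x).card = D.card - 1 := Finset.card_erase_of_mem hxD
      have hcard := Finset.card_insert_of_notMem ha
      have hD2 : 1 ≤ (D.erase x).card := Finset.card_pos.mpr ⟨y, hyx⟩
      omega
    · intro e he v hv
      have hvD : v ∈ D := hD e (Finset.mem_insert_of_mem he) v hv
      have hvx : v ≠ x := by
        intro hc
        subst hc
        have := hdisj e (Finset.mem_insert_of_mem he) s(v, y) (Finset.mem_insert_self _ _)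
          v hv (Sym2.mem_mk_left _ _)
        rw [this] at he
        exact ha he
      have hvy : v ≠ y := by
        intro hc
        subst hc
        have := hdisj e (Finset.mem_insert_of_mem he) s(x, v) (Finset.mem_insert_self _ _)
          v hv (Sym2.mem_mk_right _ _)
        rw [this] at he
        exact ha he
      exact Finset.mem_erase.mpr ⟨hvy, Finset.mem_erase.mpr ⟨hvx, hvD⟩⟩


/-! ### unions and subsets of matchings -/

lemma MFin_sub {E F : Finset (Sym2 V)} (hE : MFin G E) (hFE : F ⊆ E) : MFin G F :=
  ⟨fun e he => hE.1 e (hFE he), fun e he f hf v hv hv' => hE.2 e (hFE he) f (hFE hf) v hv hv'⟩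

lemma MFin_union {E₁ E₂ : Finset (Sym2 V)} [DecidableEq V] (h1 : MFin G E₁) (h2 : MFin G E₂)
    (hdisj : ∀ e₁ ∈ E₁, ∀ e₂ ∈ E₂, ∀ v : V, v ∈ e₁ → v ∈ e₂ → False) :
    MFin G (E₁ ∪ E₂) ∧ (E₁ ∪ E₂).card = E₁.card + E₂.card := by
  constructor
  · constructor
    · intro e he
      rcases Finset.mem_union.mp he with he | he
      · exact h1.1 e he
      · exact h2.1 e he
    · intro e he f hf v hv hv'
      rcases Finset.mem_union.mp he with he | he <;> rcases Finset.mem_union.mp hf with hf | hf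
      · exact h1.2 e he f hf v hv hv'
      · exact (hdisj e he f hf v hv hv').elim
      · exact (hdisj f hf e he v hv' hv).elim
      · exact h2.2 e he f hf v hv hv'
  · refine Finset.card_union_of_disjoint ?_
    rw [Finset.disjoint_left]
    intro e he1 he2
    obtain ⟨v, hv⟩ := sym2_exists_mem e
    exact hdisj e he1 e he2 v hv hv

lemma filter_tripart {α : Type*} (E : Finset α) (p q : α → Prop) [DecidablePred p]
    [DecidablePred q] (hpq : ∀ a, q a → ¬ p a) :
    E.card = (E.filter p).card + (E.filter q).card +
      (E.filter fun a => ¬ p a ∧ ¬ q a).card := by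
  classical
  have h1 := Finset.card_filter_add_card_filter_not (s := E) (p := p)
  have h2 := Finset.card_filter_add_card_filter_not
    (s := E.filter (fun a => ¬ p a)) (p := q)
  rw [Finset.filter_filter, Finset.filter_filter] at h2
  have e1 : E.filter (fun a => ¬ p a ∧ q a) = E.filter q := by
    apply Finset.filter_congr
    intro a _
    constructor
    · exact fun h => h.2
    · exact fun h => ⟨hpq a h, h⟩
  rw [e1] at h2
  omega

/-- `b`-incident edges of the stem matching are picked by `opick`. -/
lemma stem_bcov {M₀ : G.Subgraph} (hmatch : M₀.IsMatching) :
    ∀ {b r : V} (p : G.Walk b r), (∀ e ∈ p.edges.head?, e ∈ M₀.edgeSet) →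
    r ∉ M₀.verts → ∀ e, e ∈ M₀.edgeSet → b ∈ e → e ∈ opick p
  | _, _, .nil => fun _ hroot e he hbe => absurd (mem_verts_of_mem_edge he hbe) hroot
  | b, r, .cons (v := s₁) hadj q => by
    intro hfirst _ e he hbe
    have he₀ : s(b, s₁) ∈ M₀.edgeSet := by
      refine hfirst _ ?_
      rw [Walk.edges_cons]
      rfl
    have heq := matching_unique_edge hmatch he he₀ hbe (Sym2.mem_mk_left _ _)
    rw [opick_cons, heq]
    exact List.mem_cons_self

/-- A path matching of `C` avoiding a prescribed vertex `u`. -/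
lemma exists_pathMatch [Fintype V] {b : V} {w : G.Walk b b} (hw : w.IsCycle)
    (hodd : Odd w.length) {C : Set V} (hsup : ∀ v, v ∈ w.support ↔ v ∈ C) {u : V}
    (hu : u ∈ C) :
    ∃ P : Finset (Sym2 V), MFin G P ∧ P.card = w.length / 2 ∧
      ∀ e ∈ P, ∀ v ∈ e, v ∈ C ∧ v ≠ u := by
  classical
  have huw : u ∈ w.support := (hsup u).mpr hu
  set wR := w.rotate u huw with hwR
  have hcyc : wR.IsCycle := hw.rotate huw
  have hlen : wR.length = w.length := length_rotate w huw
  have hnn : ¬ wR.Nil := rotate_not_nil w huw hw.not_nil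
  have hsupR : ∀ v, v ∈ wR.support ↔ v ∈ C := fun v =>
    (mem_support_rotate w huw hw.not_nil).trans (hsup v)
  refine ⟨(epick wR).toFinset, ⟨?_, ?_⟩, ?_, ?_⟩
  · intro e he
    rw [List.mem_toFinset] at he
    exact wR.edges_subset_edgeSet (epick_subset wR e he)
  · intro e he f hf v hve hvf
    rw [List.mem_toFinset] at he hf
    exact epick_disj wR hcyc.support_nodup e he f hf v hve hvf
  · rw [List.toFinset_card_of_nodup (epick_nodup wR hcyc.support_nodup), epick_length, hlen]
  · intro e he v hv
    rw [List.mem_toFinset] at he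
    have h1 : v ∈ wR.support.tail.dropLast :=
      epick_cov_dropLast wR (by rw [hlen]; exact hodd) e he v hv
    have h2 := (mem_dropLast_iff hcyc.support_nodup (closed_tail_ne_nil wR hnn)).mp h1
    refine ⟨(hsupR v).mp (List.mem_of_mem_tail h2.1), ?_⟩
    intro hc
    apply h2.2
    rw [closed_tail_getLast wR (closed_tail_ne_nil wR hnn)]
    exact hc

end Aux

/-- In an `R`-disjoint graph, every maximum matching contains exactly
`⌊|V(C)|/2⌋` edges from each odd cycle `C`. -/
theorem stmt_14 {V : Type u} [Fintype V] (G : SimpleGraph V) (h : RDisjoint G)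
    (M : G.Subgraph) (hM : IsMaxMatching G M) (C : Set V) (hC : IsOddCycle G C) :
    {e ∈ M.edgeSet | ∀ v ∈ e, v ∈ C}.ncard = C.ncard / 2 := by
  classical
  -- unpack a flower on C from the nonempty reach set
  obtain ⟨z, hz⟩ := h.2.1 C hC
  obtain ⟨F, hF, -⟩ := hz
  obtain ⟨M₀, hM₀, b, r, w, p, hbl, hst, hsup, hmeet, -⟩ := hF
  have hodd := hbl.odd
  have hwcyc := hbl.cyc
  have hCcard : C.ncard = w.length := Aux.cycle_support_ncard hwcyc hsup
  have hbC : b ∈ C := (hsup b).mp w.start_mem_support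
  obtain ⟨k, hk⟩ := hodd
  -- edge finsets of the two matchings
  set Mf := Aux.eFin M with hMfdef
  set M0f := Aux.eFin M₀ with hM0fdef
  have hMfM := Aux.eFin_MFin (G := G) hM.1
  have hM0fM := Aux.eFin_MFin (G := G) hM₀.1
  have hmaxM : ∀ E : Finset (Sym2 V), Aux.MFin G E → E.card ≤ Mf.card := by
    intro E hE
    rw [hMfdef, Aux.eFin_card]
    exact Aux.MFin.card_le_of_max hM hE
  have hmaxM₀ : ∀ E : Finset (Sym2 V), Aux.MFin G E → E.card ≤ M0f.card := by
    intro E hE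
    rw [hM0fdef, Aux.eFin_card]
    exact Aux.MFin.card_le_of_max hM₀ hE
  -- vertex-count bound for internal matchings
  have hintbound : ∀ E : Finset (Sym2 V), Aux.MFin G E →
      (∀ e ∈ E, Aux.eInt C e) → E.card ≤ k := by
    intro E hE hint
    have hD : ∀ e ∈ E, ∀ v ∈ e, v ∈ (Set.toFinite C).toFinset := by
      intro e he v hv
      rw [Set.Finite.mem_toFinset]
      exact hint e he v hv
    have := Aux.int_bound E (Set.toFinite C).toFinset hE.1 hE.2 hD
    have hcc : (Set.toFinite C).toFinset.card = C.ncard :=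
      (Set.ncard_eq_toFinset_card C (Set.toFinite C)).symm
    omega
  -- the blossom edges
  have hBLmem : ∀ e ∈ Aux.epick w, e ∈ M₀.edgeSet := Aux.epick_mem w hbl.alt hbl.first
  have hBLint : ∀ e ∈ Aux.epick w, Aux.eInt C e := by
    intro e he v hv
    exact (hsup v).mp (List.mem_of_mem_tail (Aux.epick_cov_tail w e he v hv))
  have hBLcov : ∀ v ∈ C, v ≠ b → ∃ e ∈ Aux.epick w, v ∈ e := by
    intro v hv hvb
    refine Aux.epick_surj w ⟨k, hk⟩ v ?_
    have h1 : v ∈ w.support.tail :=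
      (Aux.closed_mem_tail w hwcyc.not_nil).mp ((hsup v).mpr hv)
    refine (Aux.mem_dropLast_iff hwcyc.support_nodup
      (Aux.closed_tail_ne_nil w hwcyc.not_nil)).mpr ⟨h1, ?_⟩
    intro hc
    apply hvb
    rw [hc, Aux.closed_tail_getLast w (Aux.closed_tail_ne_nil w hwcyc.not_nil)]
  have hcovint : ∀ v ∈ C, v ≠ b → ∀ e, e ∈ M₀.edgeSet → v ∈ e → Aux.eInt C e := by
    intro v hv hvb e he hve
    obtain ⟨g, hg, hvg⟩ := hBLcov v hv hvb
    have heq := Aux.matching_unique_edge hM₀.1 he (hBLmem g hg) hve hvg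
    rw [heq]
    exact hBLint g hg
  -- stem facts
  have hbtail : b ∉ p.support.tail := by
    have h1 := hst.path.support_nodup
    rw [Walk.support_eq_cons p, List.nodup_cons] at h1
    exact h1.1
  have hpout : ∀ v ∈ p.support, v ≠ b → v ∉ C := by
    intro v hv hvb hvC
    exact hvb (hmeet v hv ((hsup v).mpr hvC))
  have hptail_nC : ∀ v ∈ p.support.tail, v ∉ C := fun v hv =>
    hpout v (List.mem_of_mem_tail hv) (fun hc => hbtail (hc ▸ hv))
  have hatt_stem : ∀ v ∈ p.support, v ≠ b → b ∈ Aux.att G C v := by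
    intro v hv hvb
    refine ⟨hbC, (p.takeUntil v hv).reverse, ?_⟩
    intro x hx hxC
    rw [Walk.support_reverse, List.mem_reverse] at hx
    have hx' : x ∈ p.support := p.support_takeUntil_subset hv hx
    by_contra hxb
    exact (hpout x hx' hxb) hxC
  have hreg_pedges : ∀ e ∈ p.edges, Aux.eReg G C b e := by
    intro e he
    obtain ⟨v, hve, hvb⟩ := Aux.exists_mem_ne e (p.edges_subset_edgeSet he) b
    have hvp : v ∈ p.support := Aux.mem_support_of_mem_edges he hve
    exact ⟨v, hve, hpout v hvp hvb, hatt_stem v hvp hvb⟩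
  have hre : ∀ e, e ∈ M₀.edgeSet → r ∉ e := fun e he hr =>
    hst.root (Aux.mem_verts_of_mem_edge he hr)
  set OPf := (Aux.opick p).toFinset with hOPdef
  set EPf := (Aux.epick p).toFinset with hEPdef
  have hOPmem : ∀ e ∈ OPf, e ∈ M₀.edgeSet := by
    intro e he
    rw [hOPdef, List.mem_toFinset] at he
    exact Aux.opick_mem p hst.alt hst.first e he
  have hEPnmem : ∀ e ∈ EPf, e ∉ M₀.edgeSet := by
    intro e he
    rw [hEPdef, List.mem_toFinset] at he
    exact Aux.epick_nmem p hst.alt hst.first e he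
  have hOPcard : OPf.card = EPf.card := by
    rw [hOPdef, hEPdef, List.toFinset_card_of_nodup (Aux.opick_nodup p hst.path.support_nodup),
      List.toFinset_card_of_nodup
        (Aux.epick_nodup p (hst.path.support_nodup.sublist (List.tail_sublist _))),
      Aux.opick_length, Aux.epick_length]
    obtain ⟨t, ht⟩ := hst.even
    omega
  have hOPreg : ∀ e ∈ OPf, Aux.eReg G C b e := by
    intro e he
    rw [hOPdef, List.mem_toFinset] at he
    exact hreg_pedges e (Aux.opick_subset p e he)
  have hEPreg : ∀ e ∈ EPf, Aux.eReg G C b e := by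
    intro e he
    rw [hEPdef, List.mem_toFinset] at he
    exact hreg_pedges e (Aux.epick_subset p e he)
  have hEPG : ∀ e ∈ EPf, e ∈ G.edgeSet := by
    intro e he
    rw [hEPdef, List.mem_toFinset] at he
    exact p.edges_subset_edgeSet (Aux.epick_subset p e he)
  have hbcov : ∀ e, e ∈ M₀.edgeSet → b ∈ e → e ∈ OPf := by
    intro e he hb
    rw [hOPdef, List.mem_toFinset]
    exact Aux.stem_bcov hM₀.1 p hst.first hst.root e he hb
  -- the modified outside part OUT of M₀
  set OUTM := M0f.filter (Aux.eOut G C) with hOUTMdef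
  have hOPsubOUTM : OPf ⊆ OUTM := by
    intro e he
    rw [hOUTMdef, Finset.mem_filter]
    exact ⟨Aux.mem_eFin.mpr (hOPmem e he), b, hOPreg e he⟩
  set OUT := (OUTM \ OPf) ∪ EPf with hOUTdef
  have hOUTMsub : ∀ e ∈ OUTM, e ∈ M₀.edgeSet := by
    intro e he
    rw [hOUTMdef, Finset.mem_filter] at he
    exact Aux.mem_eFin.mp he.1
  have hEPdisjM : Disjoint (OUTM \ OPf) EPf := by
    rw [Finset.disjoint_right]
    intro e he1 he2
    exact hEPnmem e he1 (hOUTMsub e (Finset.mem_sdiff.mp he2).1)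
  have hOUTcard : OUT.card = OUTM.card := by
    rw [hOUTdef, Finset.card_union_of_disjoint hEPdisjM, Finset.card_sdiff_of_subset hOPsubOUTM,
      ← hOPcard]
    have := Finset.card_le_card hOPsubOUTM
    omega
  have hOUTG : ∀ e ∈ OUT, e ∈ G.edgeSet := by
    intro e he
    rcases Finset.mem_union.mp he with he | he
    · exact M₀.edgeSet_subset (hOUTMsub e (Finset.mem_sdiff.mp he).1)
    · exact hEPG e he
  have hOUTout : ∀ e ∈ OUT, Aux.eOut G C e := by
    intro e he
    rcases Finset.mem_union.mp he with he | he
    · rw [hOUTMdef] at he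
      exact (Finset.mem_filter.mp (Finset.mem_sdiff.mp he).1).2
    · exact ⟨b, hEPreg e he⟩
  have hOUTnC : ∀ e ∈ OUT, ∀ v ∈ e, v ∉ C := by
    intro e he v hv hvC
    rcases Finset.mem_union.mp he with he | he
    · obtain ⟨he1, he2⟩ := Finset.mem_sdiff.mp he
      have heM₀ := hOUTMsub e he1
      by_cases hvb : v = b
      · exact he2 (hbcov e heM₀ (hvb ▸ hv))
      · have hint := hcovint v hvC hvb e heM₀ hv
        obtain ⟨u', x, hxe, hxC, -⟩ := (Finset.mem_filter.mp (hOUTMdef ▸ he1)).2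
        exact hxC (hint x hxe)
    · rw [hEPdef, List.mem_toFinset] at he
      exact hptail_nC v (Aux.epick_cov_tail p e he v hv) hvC
  have hOUTMFin : Aux.MFin G OUT := by
    refine ⟨hOUTG, ?_⟩
    intro e he f hf v hve hvf
    rcases Finset.mem_union.mp he with he | he <;> rcases Finset.mem_union.mp hf with hf | hf
    · exact Aux.matching_unique_edge hM₀.1 (hOUTMsub e (Finset.mem_sdiff.mp he).1)
        (hOUTMsub f (Finset.mem_sdiff.mp hf).1) hve hvf
    · -- e from M₀, f from EPf
      obtain ⟨he1, he2⟩ := Finset.mem_sdiff.mp he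
      have heM₀ := hOUTMsub e he1
      rw [hEPdef, List.mem_toFinset] at hf
      have hvtail := Aux.epick_cov_tail p f hf v hvf
      by_cases hvr : v = r
      · exact (hre e heM₀ (hvr ▸ hve)).elim
      · have hvdl : v ∈ p.support.dropLast := by
          refine (Aux.mem_dropLast_iff hst.path.support_nodup (Walk.support_ne_nil p)).mpr
            ⟨List.mem_of_mem_tail hvtail, ?_⟩
          intro hc
          exact hvr (hc.trans (Walk.getLast_support p))
        obtain ⟨g, hg, hvg⟩ := Aux.opick_surj p hst.even v hvdl
        have hgM₀ : g ∈ M₀.edgeSet := Aux.opick_mem p hst.alt hst.first g hg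
        have heq := Aux.matching_unique_edge hM₀.1 heM₀ hgM₀ hve hvg
        exact (he2 (by rw [hOPdef, List.mem_toFinset, heq]; exact hg)).elim
    · -- symmetric
      obtain ⟨hf1, hf2⟩ := Finset.mem_sdiff.mp hf
      have hfM₀ := hOUTMsub f hf1
      rw [hEPdef, List.mem_toFinset] at he
      have hvtail := Aux.epick_cov_tail p e he v hve
      by_cases hvr : v = r
      · exact (hre f hfM₀ (hvr ▸ hvf)).elim
      · have hvdl : v ∈ p.support.dropLast := by
          refine (Aux.mem_dropLast_iff hst.path.support_nodup (Walk.support_ne_nil p)).mpr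
            ⟨List.mem_of_mem_tail hvtail, ?_⟩
          intro hc
          exact hvr (hc.trans (Walk.getLast_support p))
        obtain ⟨g, hg, hvg⟩ := Aux.opick_surj p hst.even v hvdl
        have hgM₀ : g ∈ M₀.edgeSet := Aux.opick_mem p hst.alt hst.first g hg
        have heq := Aux.matching_unique_edge hM₀.1 hfM₀ hgM₀ hvf hvg
        exact (hf2 (by rw [hOPdef, List.mem_toFinset, heq]; exact hg)).elim
    · rw [hEPdef, List.mem_toFinset] at he hf
      exact Aux.epick_disj p (hst.path.support_nodup.sublist (List.tail_sublist _))
        e he f hf v hve hvf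
  -- the Z-part of M₀ and counting of M₀
  set Zf₀ := M0f.filter (fun e => ¬ Aux.eInt C e ∧ ¬ Aux.eOut G C e) with hZf₀def
  have houtnotint : ∀ e : Sym2 V, Aux.eOut G C e → ¬ Aux.eInt C e := by
    rintro e ⟨u', x, hxe, hxC, -⟩ hint
    exact hxC (hint x hxe)
  have hM0count : M0f.card = (M0f.filter (Aux.eInt C)).card + OUTM.card + Zf₀.card :=
    Aux.filter_tripart M0f (Aux.eInt C) (Aux.eOut G C) houtnotint
  have hn₀ : (M0f.filter (Aux.eInt C)).card ≤ k := by
    refine hintbound _ (Aux.MFin_sub hM0fM (Finset.filter_subset _ _)) ?_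
    intro e he
    exact (Finset.mem_filter.mp he).2
  -- vertex facts for Z-parts
  have hZvert : ∀ (E : Finset (Sym2 V)), (∀ e ∈ E, e ∈ G.edgeSet) →
      ∀ e ∈ E.filter (fun e => ¬ Aux.eInt C e ∧ ¬ Aux.eOut G C e), ∀ v ∈ e,
      v ∉ C ∧ Aux.att G C v = ∅ := by
    intro E hEG e he v hv
    obtain ⟨he1, he2, he3⟩ := Finset.mem_filter.mp he
    exact Aux.z_vert (hEG e he1) he2 he3 v hv
  -- key regional inequality
  have hkey : ∀ u ∈ C, (Mf.filter (Aux.eReg G C u)).card ≤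
      (OUT.filter (Aux.eReg G C u)).card := by
    intro u huC
    obtain ⟨P, hPM, hPcard, hPvert⟩ := Aux.exists_pathMatch hwcyc ⟨k, hk⟩ hsup huC
    set Nu := Mf.filter (Aux.eReg G C u) with hNudef
    set OUTu := OUT.filter (Aux.eReg G C u) with hOUTudef
    have hNuM : Aux.MFin G Nu := Aux.MFin_sub hMfM (Finset.filter_subset _ _)
    have hNuvert : ∀ e ∈ Nu, ∀ v ∈ e, (v ∈ C → v = u) ∧ (v ∉ C → u ∈ Aux.att G C v) := by
      intro e he v hv
      obtain ⟨he1, he2⟩ := Finset.mem_filter.mp he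
      exact Aux.reg_vert h hC (hMfM.1 e he1) he2 v hv
    have hOrest_vert : ∀ e ∈ OUT \ OUTu, ∀ v ∈ e,
        v ∉ C ∧ ∃ u'', u'' ≠ u ∧ u'' ∈ Aux.att G C v := by
      intro e he v hv
      obtain ⟨he1, he2⟩ := Finset.mem_sdiff.mp he
      refine ⟨hOUTnC e he1 v hv, ?_⟩
      obtain ⟨u'', hreg⟩ := hOUTout e he1
      refine ⟨u'', ?_, (Aux.reg_vert h hC (hOUTG e he1) hreg v hv).2 (hOUTnC e he1 v hv)⟩
      intro hc
      exact he2 (by rw [hOUTudef, Finset.mem_filter]; exact ⟨he1, hc ▸ hreg⟩)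
    -- build the exchanged matching
    have hd1 : ∀ e1 ∈ P, ∀ e2 ∈ Nu, ∀ v : V, v ∈ e1 → v ∈ e2 → False := by
      intro e1 h1 e2 h2 v hv1 hv2
      exact (hPvert e1 h1 v hv1).2 (((hNuvert e2 h2 v hv2).1 (hPvert e1 h1 v hv1).1).symm ▸ rfl)
    have hu1 := Aux.MFin_union hPM hNuM hd1
    have hOsdM : Aux.MFin G (OUT \ OUTu) :=
      Aux.MFin_sub hOUTMFin (Finset.sdiff_subset (s := OUT) (t := OUTu))
    have hd2 : ∀ e1 ∈ P ∪ Nu, ∀ e2 ∈ OUT \ OUTu, ∀ v : V, v ∈ e1 → v ∈ e2 → False := by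
      intro e1 h1 e2 h2 v hv1 hv2
      obtain ⟨hvnC, u'', hu''ne, hu''att⟩ := hOrest_vert e2 h2 v hv2
      rcases Finset.mem_union.mp h1 with h1 | h1
      · exact hvnC (hPvert e1 h1 v hv1).1
      · exact hu''ne (Aux.att_unique h hC hu''att ((hNuvert e1 h1 v hv1).2 hvnC) hvnC)
    have hu2 := Aux.MFin_union hu1.1 hOsdM hd2
    have hZfM : Aux.MFin G Zf₀ := Aux.MFin_sub hM0fM (Finset.filter_subset _ _)
    have hd3 : ∀ e1 ∈ P ∪ Nu ∪ (OUT \ OUTu), ∀ e2 ∈ Zf₀, ∀ v : V, v ∈ e1 → v ∈ e2 → False := by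
      intro e1 h1 e2 h2 v hv1 hv2
      obtain ⟨hvnC, hvatt⟩ := hZvert M0f hM0fM.1 e2 h2 v hv2
      rcases Finset.mem_union.mp h1 with h1 | h1
      · rcases Finset.mem_union.mp h1 with h1 | h1
        · exact hvnC (hPvert e1 h1 v hv1).1
        · have := (hNuvert e1 h1 v hv1).2 hvnC
          rw [hvatt] at this
          exact this
      · obtain ⟨-, u'', -, hu''att⟩ := hOrest_vert e1 h1 v hv1
        rw [hvatt] at hu''att
        exact hu''att
    have hu3 := Aux.MFin_union hu2.1 hZfM hd3
    have hle := hmaxM₀ _ hu3.1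
    rw [hu3.2, hu2.2, hu1.2] at hle
    have hOUTusub : OUTu ⊆ OUT := Finset.filter_subset _ _
    have hsd : (OUT \ OUTu).card = OUT.card - OUTu.card := Finset.card_sdiff_of_subset hOUTusub
    have hle2 := Finset.card_le_card hOUTusub
    rw [hM0count] at hle
    rw [hPcard] at hle
    have hwl : w.length / 2 = k := by omega
    rw [hsd, hOUTcard] at hle
    omega
  -- fiberwise sum over the cycle vertices
  set CF := (Set.toFinite C).toFinset with hCFdef
  set rg : Sym2 V → V := fun e => if hout : Aux.eOut G C e then hout.choose else b with hrgdef
  have hrgspec : ∀ e : Sym2 V, Aux.eOut G C e → Aux.eReg G C (rg e) e := by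
    intro e he
    rw [hrgdef]
    simp only [he, dif_pos]
    exact he.choose_spec
  have hrgC : ∀ e : Sym2 V, Aux.eOut G C e → rg e ∈ CF := by
    intro e he
    obtain ⟨x, -, -, hatt⟩ := hrgspec e he
    rw [hCFdef, Set.Finite.mem_toFinset]
    exact hatt.1
  have hfib : ∀ E : Finset (Sym2 V), (∀ e ∈ E, e ∈ G.edgeSet) → (∀ e ∈ E, Aux.eOut G C e) →
      E.card = ∑ u ∈ CF, (E.filter (Aux.eReg G C u)).card := by
    intro E hEG hEout
    rw [Finset.card_eq_sum_card_fiberwise (f := rg) (t := CF) (fun e he => hrgC e (hEout e he))]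
    refine Finset.sum_congr rfl ?_
    intro u huCF
    congr 1
    apply Finset.filter_congr
    intro e heE
    constructor
    · intro hrg
      exact hrg ▸ hrgspec e (hEout e heE)
    · intro hreg
      exact Aux.reg_unique h hC (hEG e heE) (hrgspec e (hEout e heE)) hreg
  -- comparison of the outside parts
  have houtcmp : (Mf.filter (Aux.eOut G C)).card ≤ OUT.card := by
    have h1 := hfib (Mf.filter (Aux.eOut G C))
      (fun e he => hMfM.1 e (Finset.mem_filter.mp he).1)
      (fun e he => (Finset.mem_filter.mp he).2)
    have h2 := hfib OUT hOUTG hOUTout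
    rw [h1, h2]
    refine Finset.sum_le_sum ?_
    intro u huCF
    have huC : u ∈ C := by
      rw [hCFdef, Set.Finite.mem_toFinset] at huCF
      exact huCF
    have e1 : (Mf.filter (Aux.eOut G C)).filter (Aux.eReg G C u) =
        Mf.filter (Aux.eReg G C u) := by
      rw [Finset.filter_filter]
      apply Finset.filter_congr
      intro e he
      constructor
      · exact fun hh => hh.2
      · exact fun hh => ⟨⟨u, hh⟩, hh⟩
    rw [e1]
    exact hkey u huC
  -- the final exchange
  obtain ⟨Pb, hPbM, hPbcard, hPbvert⟩ := Aux.exists_pathMatch hwcyc ⟨k, hk⟩ hsup hbC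
  set ZfM := Mf.filter (fun e => ¬ Aux.eInt C e ∧ ¬ Aux.eOut G C e) with hZfMdef
  have hdd1 : ∀ e1 ∈ Pb, ∀ e2 ∈ OUT, ∀ v : V, v ∈ e1 → v ∈ e2 → False := by
    intro e1 h1 e2 h2 v hv1 hv2
    exact hOUTnC e2 h2 v hv2 (hPbvert e1 h1 v hv1).1
  have hv1 := Aux.MFin_union hPbM hOUTMFin hdd1
  have hZfMM : Aux.MFin G ZfM := Aux.MFin_sub hMfM (Finset.filter_subset _ _)
  have hdd2 : ∀ e1 ∈ Pb ∪ OUT, ∀ e2 ∈ ZfM, ∀ v : V, v ∈ e1 → v ∈ e2 → False := by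
    intro e1 h1 e2 h2 v hvv1 hvv2
    obtain ⟨hvnC, hvatt⟩ := hZvert Mf hMfM.1 e2 h2 v hvv2
    rcases Finset.mem_union.mp h1 with h1 | h1
    · exact hvnC (hPbvert e1 h1 v hvv1).1
    · obtain ⟨u'', hreg⟩ := hOUTout e1 h1
      have := (Aux.reg_vert h hC (hOUTG e1 h1) hreg v hvv1).2 (hOUTnC e1 h1 v hvv1)
      rw [hvatt] at this
      exact this
  have hv2 := Aux.MFin_union hv1.1 hZfMM hdd2
  have hle := hmaxM _ hv2.1
  rw [hv2.2, hv1.2, hPbcard] at hle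
  have hMcount : Mf.card = (Mf.filter (Aux.eInt C)).card +
      (Mf.filter (Aux.eOut G C)).card + ZfM.card :=
    Aux.filter_tripart Mf (Aux.eInt C) (Aux.eOut G C) houtnotint
  have hnN : (Mf.filter (Aux.eInt C)).card ≤ k := by
    refine hintbound _ (Aux.MFin_sub hMfM (Finset.filter_subset _ _)) ?_
    intro e he
    exact (Finset.mem_filter.mp he).2
  have hwl : w.length / 2 = k := by omega
  -- conclusion
  have hseteq : {e ∈ M.edgeSet | ∀ v ∈ e, v ∈ C} = ↑(Mf.filter (Aux.eInt C)) := by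
    ext e
    simp only [Set.mem_setOf_eq, Finset.coe_filter, hMfdef, Aux.mem_eFin]
    rfl
  rw [hseteq, Set.ncard_coe_finset, hCcard]
  omega
end

section
/- If G is an almost bipartite non-König–Egerváry graph, then every maximum matching of G contains at least one edge belonging to its unique odd cycle. -/
open SimpleGraph

universe u

variable {V : Type u}

set_option linter.unusedSectionVars false

namespace AB

variable {V : Type*}

section walks
variable [DecidableEq V] {Γ : SimpleGraph V}

lemma no_len_one {u : V} (w : Γ.Walk u u) (h : w.length = 1) : False := by
  cases w with
  | nil => simp at h
  | @cons u b _ ha p =>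
    rw [Walk.length_cons, Nat.add_eq_right] at h
    exact Γ.ne_of_adj ha (Walk.eq_of_length_eq_zero h).symm

lemma split_open {u v : V} (w : Γ.Walk u v) (h : ¬ w.support.Nodup) :
    ∃ (x : V) (w₁ : Γ.Walk u x) (L : Γ.Walk x x) (w₂ : Γ.Walk x v),
      w = w₁.append (L.append w₂) ∧ 0 < L.length := by
  induction w with
  | nil => simp at h
  | @cons u b v ha p ih =>
    by_cases hu : u ∈ p.support
    · refine ⟨u, Walk.nil, Walk.cons ha (p.takeUntil u hu), p.dropUntil u hu, ?_, by simp⟩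
      conv_lhs => rw [← Walk.take_spec p hu]
      rw [Walk.nil_append, ← Walk.cons_append]
    · have h' : ¬ p.support.Nodup := by
        simp only [Walk.support_cons, List.nodup_cons] at h
        tauto
      obtain ⟨x, w₁, L, w₂, hw, hL⟩ := ih h'
      exact ⟨x, Walk.cons ha w₁, L, w₂, by rw [hw, Walk.cons_append], hL⟩

lemma split_closed {u : V} (w : Γ.Walk u u) (hnn : 0 < w.length) (h : ¬ w.support.tail.Nodup) :
    ∃ (x : V) (w₁ : Γ.Walk u x) (L : Γ.Walk x x) (w₂ : Γ.Walk x u),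
      w = w₁.append (L.append w₂) ∧ 0 < L.length ∧ 0 < w₁.length + w₂.length := by
  cases w with
  | nil => simp at hnn
  | @cons u b _ ha p =>
    have h' : ¬ p.support.Nodup := by simpa using h
    obtain ⟨x, w₁, L, w₂, hw, hL⟩ := split_open p h'
    exact ⟨x, Walk.cons ha w₁, L, w₂, by rw [hw, Walk.cons_append], hL, by simp⟩

lemma first_edge_of_isPath {a b x : V} (p : Γ.Walk a b) (hp : p.IsPath)
    (he : s(x, a) ∈ p.edges) : ∃ (h : Γ.Adj a x) (q : Γ.Walk x b), p = Walk.cons h q := by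
  cases p with
  | nil => simp at he
  | @cons a c b ha q =>
    simp only [Walk.edges_cons, List.mem_cons] at he
    rcases he with he | he
    · have hcx : c = x := by
        rw [Sym2.eq_iff] at he
        rcases he with ⟨h1, h2⟩ | ⟨h1, h2⟩
        · exact absurd h2 (Γ.ne_of_adj ha)
        · exact h1.symm
      subst hcx
      exact ⟨ha, q, rfl⟩
    · exfalso
      have : a ∈ q.support := Walk.snd_mem_support_of_mem_edges q he
      exact ((Walk.cons_isPath_iff _ _).mp hp).2 this

lemma closed_tail_nodup_isCycle {u : V} (w : Γ.Walk u u) (hlen : 3 ≤ w.length)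
    (h : w.support.tail.Nodup) : w.IsCycle := by
  cases w with
  | nil => simp at hlen
  | @cons u b _ ha p =>
    have hps : p.support.Nodup := by simpa using h
    have hp : p.IsPath := (Walk.isPath_def p).mpr hps
    rw [Walk.cons_isCycle_iff]
    refine ⟨hp, fun hmem => ?_⟩
    obtain ⟨h2, q, hq⟩ := first_edge_of_isPath p hp (by rwa [Sym2.eq_swap] at hmem)
    cases q with
    | nil =>
      have : p.length = 1 := by rw [hq]; simp
      rw [Walk.length_cons, this] at hlen; omega
    | @cons u c _ h3 q' =>
      have h1 : u ∈ q'.support := by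
        have := Walk.end_mem_support q'
        convert this using 1
      have : ¬ p.support.Nodup := by
        rw [hq, Walk.support_cons, Walk.support_cons]
        intro hn
        exact ((List.nodup_cons.mp ((List.nodup_cons.mp hn).2)).1) h1
      exact this hps

end walks

section alt
variable [DecidableEq V] {Γ : SimpleGraph V}

/-- Alternating list of edges w.r.t. an edge set `E`. -/
def Alt (E : Set (Sym2 V)) (l : List (Sym2 V)) : Prop :=
  l.Chain' (fun e f => (e ∈ E ↔ f ∉ E))

lemma alt_getLast {E : Set (Sym2 V)} :
    ∀ (l : List (Sym2 V)) (hl : l ≠ []), Alt E l →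
      ((l.getLast hl ∈ E) ↔ ((l.head hl ∈ E) ↔ Odd l.length)) := by
  intro l
  induction l with
  | nil => simp
  | cons a t ih =>
    intro _ hA
    cases t with
    | nil => simp
    | cons b t' =>
      have hrel : a ∈ E ↔ b ∉ E := (List.isChain_cons_cons.mp hA).1
      have hA' : Alt E (b :: t') := (List.isChain_cons_cons.mp hA).2
      have IH := ih (by simp) hA'
      rw [List.getLast_cons (by simp : (b :: t') ≠ [])]
      rw [List.head_cons]
      have hlen : (a :: b :: t').length = (b :: t').length + 1 := rfl
      rw [hlen, Nat.odd_add_one]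
      rw [List.head_cons] at IH
      tauto

lemma alt_infix {E : Set (Sym2 V)} {l₁ l : List (Sym2 V)} (h : Alt E l) (h' : l₁ <:+: l) :
    Alt E l₁ := List.IsChain.infix h h'

/-- An odd closed walk contains an odd cycle. -/
lemma oddClosedPlain : ∀ (n : ℕ) {u : V} (w : Γ.Walk u u), w.length ≤ n → Odd w.length →
    ∃ (z : V) (c : Γ.Walk z z), c.IsCycle ∧ Odd c.length := by
  intro n
  induction n with
  | zero => intro u w hn ho; rw [Nat.le_zero] at hn; rw [hn] at ho; simp at ho
  | succ n ih =>
    intro u w hn ho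
    have hpos : 0 < w.length := ho.pos
    have h3 : 3 ≤ w.length := by
      rcases ho with ⟨k, hk⟩
      rcases Nat.eq_zero_or_pos k with h0 | h0
      · exact absurd (by omega : w.length = 1) (fun hh => (no_len_one w hh))
      · omega
    by_cases hnd : w.support.tail.Nodup
    · exact ⟨u, w, closed_tail_nodup_isCycle w h3 hnd, ho⟩
    · obtain ⟨x, w₁, L, w₂, hw, hL, hprop⟩ := split_closed w hpos hnd
      have hlen : w.length = w₁.length + (L.length + w₂.length) := by
        rw [hw, Walk.length_append, Walk.length_append]
      rcases Nat.even_or_odd L.length with hLe | hLo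
      · -- drop L
        have hlt : w₁.length + w₂.length ≤ n := by omega
        have hodd : Odd (w₁.append w₂).length := by
          rw [Walk.length_append]
          obtain ⟨k, hk⟩ := hLe
          obtain ⟨m, hm⟩ := ho
          exact ⟨m - k, by omega⟩
        exact ih (w₁.append w₂) (by rwa [Walk.length_append]) hodd
      · exact ih L (by omega) hLo


/-- An odd closed *alternating* walk contains an odd cycle through an `E`-edge. -/
lemma oddClosedAlt {E : Set (Sym2 V)} : ∀ (n : ℕ) {u : V} (w : Γ.Walk u u), w.length ≤ n →
    Odd w.length → Alt E w.edges →
    ∃ (z : V) (c : Γ.Walk z z), c.IsCycle ∧ Odd c.length ∧ ∃ e ∈ c.edges, e ∈ E := by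
  intro n
  induction n with
  | zero => intro u w hn ho _; rw [Nat.le_zero] at hn; rw [hn] at ho; simp at ho
  | succ n ih =>
    intro u w hn ho hA
    have hpos : 0 < w.length := ho.pos
    have h3 : 3 ≤ w.length := by
      rcases ho with ⟨k, hk⟩
      rcases Nat.eq_zero_or_pos k with h0 | h0
      · exact absurd (by omega : w.length = 1) (fun hh => (no_len_one w hh))
      · omega
    by_cases hnd : w.support.tail.Nodup
    · refine ⟨u, w, closed_tail_nodup_isCycle w h3 hnd, ho, ?_⟩
      have hel : 2 ≤ w.edges.length := by rw [Walk.length_edges]; omega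
      rcases hEq : w.edges with _ | ⟨e₁, rest⟩
      · rw [hEq] at hel; simp at hel
      rcases hReq : rest with _ | ⟨e₂, t⟩
      · rw [hEq, hReq] at hel; simp at hel
      have hchain := hA
      rw [hEq, hReq] at hchain
      have hrel : e₁ ∈ E ↔ e₂ ∉ E := (List.isChain_cons_cons.mp hchain).1
      by_cases he₁ : e₁ ∈ E
      · exact ⟨e₁, List.mem_cons_self, he₁⟩
      · refine ⟨e₂, List.mem_cons_of_mem _ List.mem_cons_self, ?_⟩
        by_contra he₂
        exact he₁ (hrel.mpr he₂)
    · obtain ⟨x, w₁, L, w₂, hw, hL, hprop⟩ := split_closed w hpos hnd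
      have hlen : w.length = w₁.length + (L.length + w₂.length) := by
        rw [hw, Walk.length_append, Walk.length_append]
      have hEdges : w.edges = w₁.edges ++ (L.edges ++ w₂.edges) := by
        rw [hw, Walk.edges_append, Walk.edges_append]
      have hA' := hA
      rw [hEdges] at hA'
      obtain ⟨C1, Crest, J1⟩ := List.isChain_append.mp hA'
      obtain ⟨CL, C2, J2⟩ := List.isChain_append.mp Crest
      have hLne : L.edges ≠ [] := by
        apply List.ne_nil_of_length_pos
        rw [Walk.length_edges]; omega
      rcases Nat.even_or_odd L.length with hLe | hLo
      · -- drop the even loop L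
        have hodd : Odd (w₁.append w₂).length := by
          rw [Walk.length_append]
          obtain ⟨k, hk⟩ := hLe
          obtain ⟨m, hm⟩ := ho
          exact ⟨m - k, by omega⟩
        have hAlt' : Alt E (w₁.append w₂).edges := by
          rw [Walk.edges_append]
          refine List.isChain_append.mpr ⟨C1, C2, fun x hx y hy => ?_⟩
          have hx1 : x ∈ E ↔ (L.edges.head hLne) ∉ E := by
            apply J1 x hx
            rw [List.head?_append, List.head?_eq_head hLne]
            rfl
          have hy2 : (L.edges.getLast hLne) ∈ E ↔ y ∉ E := by
            apply J2 _ _ y hy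
            rw [List.getLast?_eq_getLast_of_ne_nil hLne]
            rfl
          have hpar := alt_getLast L.edges hLne CL
          have hnotodd : ¬ Odd L.edges.length := by
            rw [Walk.length_edges]
            exact (Nat.not_odd_iff_even.mpr hLe)
          tauto
        exact ih (w₁.append w₂) (by rw [Walk.length_append]; omega) hodd hAlt'
      · exact ih L (by omega) hLo CL

end alt

section matchings
variable [Fintype V] [DecidableEq V] {Γ : SimpleGraph V}

lemma alt_congr {E E' : Set (Sym2 V)} : ∀ (l : List (Sym2 V)),
    (∀ e ∈ l, (e ∈ E ↔ e ∈ E')) → Alt E l → Alt E' l := by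
  intro l
  induction l with
  | nil => intro _ _; exact List.isChain_nil
  | cons a t ih =>
    intro hiff hA
    cases t with
    | nil => exact List.isChain_singleton a
    | cons b t' =>
      obtain ⟨hab, hA'⟩ := List.isChain_cons_cons.mp hA
      refine List.isChain_cons_cons.mpr ⟨?_, ih (fun e he => hiff e (List.mem_cons_of_mem _ he)) hA'⟩
      have h1 := hiff a (List.mem_cons_self)
      have h2 := hiff b (List.mem_cons_of_mem _ List.mem_cons_self)
      tauto

lemma matching_unique {M : Γ.Subgraph} (hm : M.IsMatching) {v x y : V}
    (hx : M.Adj v x) (hy : M.Adj v y) : x = y := by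
  obtain ⟨w, _, hw⟩ := hm (M.edge_vert hx)
  rw [hw x hx, hw y hy]

/-- Add an edge between two unmatched vertices. -/
lemma add_edge_matching {M : Γ.Subgraph} (hm : M.IsMatching) {a b : V} (hab : Γ.Adj a b)
    (ha : a ∉ M.verts) (hb : b ∉ M.verts) :
    ∃ N : Γ.Subgraph, N.IsMatching ∧ N.edgeSet = insert s(a, b) M.edgeSet := by
  classical
  refine ⟨⟨insert a (insert b M.verts),
    fun x y => M.Adj x y ∨ (x = a ∧ y = b) ∨ (x = b ∧ y = a), ?_, ?_, ?_⟩, ?_, ?_⟩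
  · rintro x y (h | ⟨rfl, rfl⟩ | ⟨rfl, rfl⟩)
    · exact M.adj_sub h
    · exact hab
    · exact hab.symm
  · rintro x y (h | ⟨rfl, rfl⟩ | ⟨rfl, rfl⟩)
    · exact Set.mem_insert_of_mem _ (Set.mem_insert_of_mem _ (M.edge_vert h))
    · exact Set.mem_insert _ _
    · exact Set.mem_insert_of_mem _ (Set.mem_insert _ _)
  · constructor; rintro x y (h | ⟨rfl, rfl⟩ | ⟨rfl, rfl⟩)
    · exact Or.inl h.symm
    · exact Or.inr (Or.inr ⟨rfl, rfl⟩)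
    · exact Or.inr (Or.inl ⟨rfl, rfl⟩)
  · rintro v hv
    rcases hv with rfl | hv
    · refine ⟨b, Or.inr (Or.inl ⟨rfl, rfl⟩), ?_⟩
      rintro y (h | ⟨h1, h2⟩ | ⟨h1, h2⟩)
      · exact absurd (M.edge_vert h) ha
      · exact h2
      · exact absurd h1.symm (Γ.ne_of_adj hab.symm)
    rcases hv with rfl | hv
    · refine ⟨a, Or.inr (Or.inr ⟨rfl, rfl⟩), ?_⟩
      rintro y (h | ⟨h1, h2⟩ | ⟨h1, h2⟩)
      · exact absurd (M.edge_vert h) hb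
      · exact absurd h1 (Γ.ne_of_adj hab.symm) 
      · exact h2
    · obtain ⟨wv, hwv, huniq⟩ := hm hv
      refine ⟨wv, Or.inl hwv, ?_⟩
      rintro y (h | ⟨h1, h2⟩ | ⟨h1, h2⟩)
      · exact huniq y h
      · exact absurd (h1 ▸ hv) ha
      · exact absurd (h1 ▸ hv) hb
  · ext e
    induction e using Sym2.ind with
    | _ x y =>
      simp only [Subgraph.mem_edgeSet, Set.mem_insert_iff, Sym2.eq_iff]
      tauto

/-- Exchange an edge of the matching for an edge to an unmatched vertex. -/
lemma swap_matching {M : Γ.Subgraph} (hm : M.IsMatching) {a v₁ v₂ : V}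
    (h12 : M.Adj v₁ v₂) (hav : Γ.Adj a v₁) (ha : a ∉ M.verts) :
    ∃ N : Γ.Subgraph, N.IsMatching ∧ N.verts = insert a (M.verts \ {v₂}) ∧
      N.edgeSet = insert s(a, v₁) (M.edgeSet \ {s(v₁, v₂)}) := by
  classical
  have hv1 : v₁ ∈ M.verts := M.edge_vert h12
  have hv2 : v₂ ∈ M.verts := M.edge_vert h12.symm
  have hne12 : v₁ ≠ v₂ := Γ.ne_of_adj (M.adj_sub h12)
  have hna1 : a ≠ v₁ := fun h => ha (h ▸ hv1)
  have hna2 : a ≠ v₂ := fun h => ha (h ▸ hv2)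
  refine ⟨⟨insert a (M.verts \ {v₂}),
    fun x y => (M.Adj x y ∧ s(x, y) ≠ s(v₁, v₂)) ∨ (x = a ∧ y = v₁) ∨ (x = v₁ ∧ y = a),
    ?_, ?_, ?_⟩, ?_, rfl, ?_⟩
  · rintro x y (⟨h, _⟩ | ⟨rfl, rfl⟩ | ⟨rfl, rfl⟩)
    · exact M.adj_sub h
    · exact hav
    · exact hav.symm
  · rintro x y (⟨h, hne⟩ | ⟨rfl, rfl⟩ | ⟨rfl, rfl⟩)
    · refine Set.mem_insert_of_mem _ ⟨M.edge_vert h, ?_⟩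
      simp only [Set.mem_singleton_iff]
      rintro rfl
      have hy : y = v₁ := matching_unique hm h h12.symm
      rw [hy, Sym2.eq_swap] at hne
      exact hne rfl
    · exact Set.mem_insert _ _
    · exact Set.mem_insert_of_mem _ ⟨hv1, by simpa using hne12⟩
  · constructor; rintro x y (⟨h, hne⟩ | ⟨rfl, rfl⟩ | ⟨rfl, rfl⟩)
    · exact Or.inl ⟨h.symm, by rwa [Sym2.eq_swap]⟩
    · exact Or.inr (Or.inr ⟨rfl, rfl⟩)
    · exact Or.inr (Or.inl ⟨rfl, rfl⟩)
  · rintro v hv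
    rcases hv with rfl | ⟨hv, hvne⟩
    · refine ⟨v₁, Or.inr (Or.inl ⟨rfl, rfl⟩), ?_⟩
      rintro y (⟨h, _⟩ | ⟨h1, h2⟩ | ⟨h1, h2⟩)
      · exact absurd (M.edge_vert h) ha
      · exact h2
      · exact absurd h1 hna1
    · simp only [Set.mem_singleton_iff] at hvne
      by_cases hvv1 : v = v₁
      · subst hvv1
        refine ⟨a, Or.inr (Or.inr ⟨rfl, rfl⟩), ?_⟩
        rintro y (⟨h, hne⟩ | ⟨h1, h2⟩ | ⟨h1, h2⟩)
        · exact absurd (by rw [matching_unique hm h h12]) hne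
        · exact absurd h1.symm hna1
        · exact h2
      · obtain ⟨wv, hwv, huniq⟩ := hm hv
        have hwv2 : wv ≠ v₂ := by
          rintro rfl
          exact hvv1 (matching_unique hm hwv.symm h12.symm)
        refine ⟨wv, Or.inl ⟨hwv, ?_⟩, ?_⟩
        · simp only [ne_eq, Sym2.eq_iff]
          rintro (⟨rfl, rfl⟩ | ⟨rfl, rfl⟩)
          · exact hvv1 rfl
          · exact hvne rfl
        · rintro y (⟨h, _⟩ | ⟨h1, h2⟩ | ⟨h1, h2⟩)
          · exact huniq y h
          · exact absurd (h1 ▸ hv) ha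
          · exact absurd h1 hvv1
  · ext e
    induction e using Sym2.ind with
    | _ x y =>
      simp only [Subgraph.mem_edgeSet, Set.mem_insert_iff, Set.mem_diff,
        Set.mem_singleton_iff, ne_eq, Sym2.eq_iff]
      tauto

/-- Berge: an augmenting path yields a bigger matching. -/
lemma aug : ∀ (n : ℕ) (M : Γ.Subgraph), M.IsMatching → ∀ {a b : V} (w : Γ.Walk a b),
    w.length ≤ n → w.IsPath → Odd w.length → Alt M.edgeSet w.edges →
    (∀ e ∈ w.edges.head?, e ∉ M.edgeSet) → a ∉ M.verts → b ∉ M.verts →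
    ∃ N : Γ.Subgraph, N.IsMatching ∧ N.edgeSet.ncard = M.edgeSet.ncard + 1 := by
  intro n
  induction n with
  | zero =>
    intro M hm a b w hn _ ho _ _ _ _
    rw [Nat.le_zero] at hn; rw [hn] at ho; simp at ho
  | succ n ih =>
    intro M hm a b w hn hp ho hA hhead ha hb
    cases w with
    | nil => simp at ho
    | @cons a v₁ b h₁ w' =>
      cases w' with
      | nil =>
        -- single edge a-b
        obtain ⟨N, hNm, hNe⟩ := add_edge_matching hm h₁ ha hb
        refine ⟨N, hNm, ?_⟩
        rw [hNe, Set.ncard_insert_of_notMem (fun hmem => ha (M.edge_vert (Subgraph.mem_edgeSet.mp hmem)))]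
      | @cons v₁ v₂ b h₂ w'' =>
        have he₁ : s(a, v₁) ∉ M.edgeSet := by
          apply hhead
          simp [Walk.edges_cons]
        have hrel : s(a, v₁) ∈ M.edgeSet ↔ s(v₁, v₂) ∉ M.edgeSet := by
          have := hA
          simp only [Walk.edges_cons] at this
          exact (List.isChain_cons_cons.mp this).1
        have he₂ : s(v₁, v₂) ∈ M.edgeSet := by tauto
        have h12 : M.Adj v₁ v₂ := Subgraph.mem_edgeSet.mp he₂
        obtain ⟨N, hNm, hNv, hNe⟩ := swap_matching hm h12 h₁ ha
        have hNcard : N.edgeSet.ncard = M.edgeSet.ncard := by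
          rw [hNe]
          exact Set.ncard_exchange (fun hmem => ha (M.edge_vert (Subgraph.mem_edgeSet.mp hmem))) he₂
        -- path facts
        have hpath' : (Walk.cons h₂ w'').IsPath := hp.of_cons
        have hpath'' : w''.IsPath := hpath'.of_cons
        have hans : a ∉ (Walk.cons h₂ w'').support := ((Walk.cons_isPath_iff _ _).mp hp).2
        have hv1ns : v₁ ∉ w''.support := ((Walk.cons_isPath_iff _ _).mp hpath').2
        have hv2s : v₂ ∈ (Walk.cons h₂ w'').support := by
          rw [Walk.support_cons]
          exact List.mem_cons_of_mem _ (Walk.start_mem_support w'')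
        have hbs : b ∈ (Walk.cons h₂ w'').support := Walk.end_mem_support _
        -- membership transfer on w''.edges
        have htrans : ∀ e ∈ w''.edges, (e ∈ M.edgeSet ↔ e ∈ N.edgeSet) := by
          intro e he
          have hea : e ≠ s(a, v₁) := by
            rintro rfl
            exact hans (List.mem_cons_of_mem _ (Walk.fst_mem_support_of_mem_edges w'' he))
          have hev : e ≠ s(v₁, v₂) := by
            rintro rfl
            exact hv1ns (Walk.fst_mem_support_of_mem_edges w'' he)
          rw [hNe]
          simp only [Set.mem_insert_iff, Set.mem_diff, Set.mem_singleton_iff]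
          tauto
        have hA'' : Alt N.edgeSet w''.edges := by
          apply alt_congr w''.edges (fun e he => htrans e he)
          have := hA
          simp only [Walk.edges_cons] at this
          exact ((List.isChain_cons_cons.mp this).2).tail
        have hhead'' : ∀ e ∈ w''.edges.head?, e ∉ N.edgeSet := by
          intro e hee
          cases w'' with
          | nil => simp at hee
          | @cons v₂ v₃ b h₃ w₃ =>
            simp only [Walk.edges_cons, List.head?_cons, Option.mem_some_iff] at hee
            subst hee
            have hrel2 : s(v₁, v₂) ∈ M.edgeSet ↔ s(v₂, v₃) ∉ M.edgeSet := by
              have := hA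
              simp only [Walk.edges_cons] at this
              exact ((List.isChain_cons_cons.mp ((List.isChain_cons_cons.mp this).2))).1
            have : s(v₂, v₃) ∉ M.edgeSet := by tauto
            intro hmem
            exact this ((htrans _ (by simp [Walk.edges_cons])).mpr hmem)
        have hv₂N : v₂ ∉ N.verts := by
          rw [hNv]
          intro hmem
          rcases Set.mem_insert_iff.mp hmem with rfl | hd
          · exact hans hv2s
          · exact hd.2 rfl
        have hbN : b ∉ N.verts := by
          rw [hNv]
          intro hmem
          rcases Set.mem_insert_iff.mp hmem with rfl | hd
          · exact hans hbs
          · exact hb hd.1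
        have hlen'' : w''.length ≤ n := by
          have := hn
          simp only [Walk.length_cons] at this
          omega
        have ho'' : Odd w''.length := by
          have := ho
          simp only [Walk.length_cons] at this
          rcases this with ⟨k, hk⟩
          exact ⟨k - 1, by omega⟩
        obtain ⟨N', hN'm, hN'c⟩ := ih N hNm w'' hlen'' hpath'' ho'' hA'' hhead'' hv₂N hbN
        exact ⟨N', hN'm, by rw [hN'c, hNcard]⟩

/-- The two "bad" outcomes used to derive contradictions. -/
def BadConc (Γ : SimpleGraph V) (M : Γ.Subgraph) : Prop :=
  (∃ N : Γ.Subgraph, N.IsMatching ∧ N.edgeSet.ncard = M.edgeSet.ncard + 1) ∨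
  (∃ (z : V) (c : Γ.Walk z z), c.IsCycle ∧ Odd c.length ∧ ∃ e ∈ c.edges, e ∈ M.edgeSet)

lemma head?_append_left {α : Type*} (l l' : List α) (h : l ≠ []) :
    (l ++ l').head? = l.head? := by
  cases l with
  | nil => exact absurd rfl h
  | cons a t => rfl

/-- An odd alternating walk between two (distinct or not) exposed vertices gives
a bigger matching or an odd cycle through a matching edge. -/
lemma awalk : ∀ (n : ℕ) (M : Γ.Subgraph), M.IsMatching → ∀ {a b : V} (w : Γ.Walk a b),
    w.length ≤ n → Odd w.length → Alt M.edgeSet w.edges →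
    (∀ e ∈ w.edges.head?, e ∉ M.edgeSet) → a ∉ M.verts → b ∉ M.verts →
    BadConc Γ M := by
  intro n
  induction n with
  | zero =>
    intro M hm a b w hn ho _ _ _ _
    rw [Nat.le_zero] at hn; rw [hn] at ho; simp at ho
  | succ n ih =>
    intro M hm a b w hn ho hA hhead ha hb
    by_cases hnd : w.support.Nodup
    · exact Or.inl (aug (n+1) M hm w hn ((Walk.isPath_def w).mpr hnd) ho hA hhead ha hb)
    · obtain ⟨x, w₁, L, w₂, hw, hL⟩ := split_open w hnd
      have hlen : w.length = w₁.length + (L.length + w₂.length) := by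
        rw [hw, Walk.length_append, Walk.length_append]
      have hEdges : w.edges = w₁.edges ++ (L.edges ++ w₂.edges) := by
        rw [hw, Walk.edges_append, Walk.edges_append]
      have hA' := hA
      rw [hEdges] at hA'
      obtain ⟨C1, Crest, J1⟩ := List.isChain_append.mp hA'
      obtain ⟨CL, C2, J2⟩ := List.isChain_append.mp Crest
      have hLne : L.edges ≠ [] := by
        apply List.ne_nil_of_length_pos
        rw [Walk.length_edges]; omega
      rcases Nat.even_or_odd L.length with hLe | hLo
      · -- drop the even loop L
        have hodd : Odd (w₁.append w₂).length := by
          rw [Walk.length_append]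
          obtain ⟨k, hk⟩ := hLe
          obtain ⟨m, hm'⟩ := ho
          exact ⟨m - k, by omega⟩
        have hpar := alt_getLast L.edges hLne CL
        have hnotodd : ¬ Odd L.edges.length := by
          rw [Walk.length_edges]
          exact (Nat.not_odd_iff_even.mpr hLe)
        have hAlt' : Alt M.edgeSet (w₁.append w₂).edges := by
          rw [Walk.edges_append]
          refine List.isChain_append.mpr ⟨C1, C2, fun x hx y hy => ?_⟩
          have hx1 : x ∈ M.edgeSet ↔ (L.edges.head hLne) ∉ M.edgeSet := by
            apply J1 x hx
            rw [List.head?_append, List.head?_eq_head hLne]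
            rfl
          have hy2 : (L.edges.getLast hLne) ∈ M.edgeSet ↔ y ∉ M.edgeSet := by
            apply J2 _ _ y hy
            rw [List.getLast?_eq_getLast_of_ne_nil hLne]
            rfl
          tauto
        have hhead' : ∀ e ∈ (w₁.append w₂).edges.head?, e ∉ M.edgeSet := by
          rw [Walk.edges_append]
          by_cases hw1 : w₁.edges = []
          · rw [hw1, List.nil_append]
            intro e he
            have hLhead : (L.edges.head hLne) ∉ M.edgeSet := by
              apply hhead
              rw [hEdges, hw1, List.nil_append, head?_append_left _ _ hLne,
                List.head?_eq_head hLne]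
              rfl
            have hLlast : (L.edges.getLast hLne) ∈ M.edgeSet := by tauto
            have := J2 _ (by rw [List.getLast?_eq_getLast_of_ne_nil hLne]; rfl) e he
            tauto
          · rw [head?_append_left _ _ hw1]
            intro e he
            apply hhead
            rwa [hEdges, head?_append_left _ _ hw1]
        exact ih M hm (w₁.append w₂) (by rw [Walk.length_append]; omega) hodd hAlt' hhead' ha hb
      · -- L is an odd closed alternating walk
        have hAL : Alt M.edgeSet L.edges := CL
        obtain ⟨z, c, hc, hoc, he⟩ := oddClosedAlt L.length L le_rfl hLo hAL
        exact Or.inr ⟨z, c, hc, hoc, he⟩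

end matchings

section forest
variable [Fintype V] [DecidableEq V]

/-- Alternating reachability from exposed vertices: `false` = reached by an even
alternating walk (ending with a matching edge), `true` = reached by an odd one. -/
inductive RT (Γ : SimpleGraph V) (M : Γ.Subgraph) : Bool → V → Prop
  | exposed (v : V) : v ∉ M.verts → RT Γ M false v
  | oddstep {u z : V} : RT Γ M false u → Γ.Adj u z → s(u, z) ∉ M.edgeSet → RT Γ M true z
  | evenstep {z m : V} : RT Γ M true z → M.Adj z m → RT Γ M false m

variable {Γ : SimpleGraph V} {M : Γ.Subgraph}

lemma rt_extract {side : Bool} {v : V} (h : RT Γ M side v) :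
    ∃ (r : V) (w : Γ.Walk r v), r ∉ M.verts ∧ Alt M.edgeSet w.edges ∧
      (side = true → Odd w.length) ∧ (side = false → Even w.length) ∧
      (∀ e ∈ w.edges.head?, e ∉ M.edgeSet) ∧
      (∀ e ∈ w.edges.getLast?, (side = true → e ∉ M.edgeSet) ∧ (side = false → e ∈ M.edgeSet)) := by
  induction h with
  | exposed v hv =>
    exact ⟨v, Walk.nil, hv, List.isChain_nil, by simp, by simp, by simp, by simp⟩
  | @oddstep u z hu hadj hnm ih =>
    obtain ⟨r, w, hr, hA, _, hev, hhead, hlast⟩ := ih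
    have hpar : Even w.length := hev rfl
    refine ⟨r, w.concat hadj, hr, ?_, ?_, by simp, ?_, ?_⟩
    · rw [Walk.edges_concat, List.concat_eq_append]
      refine List.isChain_append.mpr ⟨hA, List.isChain_singleton _, ?_⟩
      intro x hx y hy
      simp only [List.head?_cons, Option.mem_some_iff] at hy
      subst hy
      have := (hlast x hx).2 rfl
      tauto
    · intro _
      rw [Walk.length_concat]
      exact Even.add_one hpar
    · rw [Walk.edges_concat, List.concat_eq_append]
      by_cases hwe : w.edges = []
      · rw [hwe, List.nil_append]
        intro e he
        simp only [List.head?_cons, Option.mem_some_iff] at he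
        subst he; exact hnm
      · rw [head?_append_left _ _ hwe]
        exact hhead
    · rw [Walk.edges_concat, List.concat_eq_append]
      intro e he
      rw [List.getLast?_append_of_ne_nil _ (by simp)] at he
      simp only [List.getLast?_singleton, Option.mem_some_iff] at he
      subst he
      exact ⟨fun _ => hnm, by simp⟩
  | @evenstep z m hz hzm ih =>
    obtain ⟨r, w, hr, hA, hod, _, hhead, hlast⟩ := ih
    have hpar : Odd w.length := hod rfl
    have hem : s(z, m) ∈ M.edgeSet := Subgraph.mem_edgeSet.mpr hzm
    have hwe : w.edges ≠ [] := by
      apply List.ne_nil_of_length_pos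
      rw [Walk.length_edges]
      exact hpar.pos
    refine ⟨r, w.concat (M.adj_sub hzm), hr, ?_, by simp, ?_, ?_, ?_⟩
    · rw [Walk.edges_concat, List.concat_eq_append]
      refine List.isChain_append.mpr ⟨hA, List.isChain_singleton _, ?_⟩
      intro x hx y hy
      simp only [List.head?_cons, Option.mem_some_iff] at hy
      subst hy
      have := (hlast x hx).1 rfl
      tauto
    · intro _
      rw [Walk.length_concat]
      exact hpar.add_one
    · rw [Walk.edges_concat, List.concat_eq_append, head?_append_left _ _ hwe]
      exact hhead
    · rw [Walk.edges_concat, List.concat_eq_append]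
      intro e he
      rw [List.getLast?_append_of_ne_nil _ (by simp)] at he
      simp only [List.getLast?_singleton, Option.mem_some_iff] at he
      subst he
      exact ⟨by simp, fun _ => hem⟩

lemma alt_reverse {E : Set (Sym2 V)} {l : List (Sym2 V)} (h : Alt E l) : Alt E l.reverse := by
  rw [Alt]; refine List.isChain_reverse.mpr ?_
  exact List.IsChain.imp (fun a b hab => show b ∈ E ↔ a ∉ E by tauto) h

/-- A vertex cannot be both evenly and oddly reachable (else bigger matching or blossom). -/
lemma rt_not_both (hm : M.IsMatching) (hbad : ¬ BadConc Γ M) {v : V}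
    (h0 : RT Γ M false v) (h1 : RT Γ M true v) : False := by
  obtain ⟨r, w, hr, hA, hod, _, hhead, hlast⟩ := rt_extract h1
  obtain ⟨r', w', hr', hA', _, hev', hhead', hlast'⟩ := rt_extract h0
  have hpar : Odd w.length := hod rfl
  have hpar' : Even w'.length := hev' rfl
  apply hbad
  have hwe : w.edges ≠ [] := by
    apply List.ne_nil_of_length_pos
    rw [Walk.length_edges]
    exact hpar.pos
  refine awalk (w.length + w'.length) M hm (w.append w'.reverse) ?_ ?_ ?_ ?_ hr hr'
  · rw [Walk.length_append, Walk.length_reverse]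
  · rw [Walk.length_append, Walk.length_reverse]
    obtain ⟨k, hk⟩ := hpar
    obtain ⟨k', hk'⟩ := hpar'
    exact ⟨k + k', by omega⟩
  · rw [Walk.edges_append, Walk.edges_reverse]
    refine List.isChain_append.mpr ⟨hA, alt_reverse hA', ?_⟩
    intro x hx y hy
    rw [List.head?_reverse] at hy
    have hx' := (hlast x hx).1 rfl
    have hy' := (hlast' y hy).2 rfl
    tauto
  · rw [Walk.edges_append, head?_append_left _ _ hwe]
    exact hhead

/-- Every `Γ`-neighbour of an evenly-reachable vertex is oddly reachable. -/
lemma r0_adj {x y : V} (hm : M.IsMatching) (hx : RT Γ M false x) (hadj : Γ.Adj x y) :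
    RT Γ M true y := by
  by_cases hmem : s(x, y) ∈ M.edgeSet
  · cases hx with
    | exposed v hv => exact absurd (M.edge_vert (Subgraph.mem_edgeSet.mp hmem)) hv
    | @evenstep z m hz hzm =>
      have : y = z := matching_unique hm (Subgraph.mem_edgeSet.mp hmem) hzm.symm
      exact this ▸ hz
  · exact RT.oddstep hx hadj hmem

/-- Oddly reachable vertices are matched. -/
lemma t_matched (hm : M.IsMatching) (hbad : ¬ BadConc Γ M) {z : V}
    (h1 : RT Γ M true z) : z ∈ M.verts := by
  by_contra hz
  obtain ⟨r, w, hr, hA, hod, _, hhead, _⟩ := rt_extract h1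
  exact hbad (awalk w.length M hm w le_rfl (hod rfl) hA hhead hr hz)

lemma mem_medge_eq (hm : M.IsMatching) {v : V} {e e' : Sym2 V}
    (he : e ∈ M.edgeSet) (he' : e' ∈ M.edgeSet) (hv : v ∈ e) (hv' : v ∈ e') : e = e' := by
  obtain ⟨w, rfl⟩ := Sym2.mem_iff_exists.mp hv
  obtain ⟨w', rfl⟩ := Sym2.mem_iff_exists.mp hv'
  rw [matching_unique hm (Subgraph.mem_edgeSet.mp he) (Subgraph.mem_edgeSet.mp he')]

/-- The alternating forest yields an independent set `S` with `|S| + |M| = |V|`. -/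
lemma forest_main (hm : M.IsMatching) (hbad : ¬ BadConc Γ M) (col : V → Bool)
    (hcol : ∀ x y : V, ¬ RT Γ M false x → ¬ RT Γ M true x → ¬ RT Γ M false y →
      ¬ RT Γ M true y → Γ.Adj x y → col x ≠ col y) :
    ∃ S : Set V, (∀ ⦃x⦄, x ∈ S → ∀ ⦃y⦄, y ∈ S → ¬ Γ.Adj x y) ∧
      S.ncard + M.edgeSet.ncard = Nat.card V := by
  classical
  set S : Set V := {v | RT Γ M false v ∨ (¬ RT Γ M false v ∧ ¬ RT Γ M true v ∧ col v = true)}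
    with hSdef
  have hmemS : ∀ v : V, v ∈ S ↔
      (RT Γ M false v ∨ (¬ RT Γ M false v ∧ ¬ RT Γ M true v ∧ col v = true)) := fun v => Iff.rfl
  have hTS : ∀ v : V, RT Γ M true v → v ∉ S := by
    intro v h1 hv
    rcases (hmemS v).mp hv with h0 | ⟨_, hn1, _⟩
    · exact rt_not_both hm hbad h0 h1
    · exact hn1 h1
  have hR0S : ∀ v : V, RT Γ M false v → v ∈ S := fun v h => Or.inl h
  have medge : ∀ x y : V, M.Adj x y → x ∈ S → y ∉ S := by
    intro x y hxy hx
    rcases (hmemS x).mp hx with hx0 | ⟨hnx0, hnx1, hcolx⟩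
    · exact hTS y (r0_adj hm hx0 (M.adj_sub hxy))
    · have hny0 : ¬ RT Γ M false y := fun hy0 => hnx1 (r0_adj hm hy0 (M.adj_sub hxy).symm)
      have hny1 : ¬ RT Γ M true y := fun hy1 => hnx0 (RT.evenstep hy1 hxy.symm)
      have hcoly : col y ≠ col x := (hcol x y hnx0 hnx1 hny0 hny1 (M.adj_sub hxy)).symm
      intro hy
      rcases (hmemS y).mp hy with hy0 | ⟨_, _, hcoly'⟩
      · exact hny0 hy0
      · rw [hcolx, hcoly'] at hcoly
        exact hcoly rfl
  have medge' : ∀ x y : V, M.Adj x y → x ∉ S → y ∈ S := by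
    intro x y hxy hxS
    have hnx0 : ¬ RT Γ M false x := fun h => hxS (hR0S x h)
    by_cases hx1 : RT Γ M true x
    · exact hR0S y (RT.evenstep hx1 hxy)
    · have hcolx : col x = false := by
        cases hcx : col x with
        | false => rfl
        | true => exact absurd ((hmemS x).mpr (Or.inr ⟨hnx0, hx1, hcx⟩)) hxS
      have hny0 : ¬ RT Γ M false y := fun hy0 => hx1 (r0_adj hm hy0 (M.adj_sub hxy).symm)
      have hny1 : ¬ RT Γ M true y := fun hy1 => hnx0 (RT.evenstep hy1 hxy.symm)
      have hcoly : col y ≠ col x := (hcol x y hnx0 hx1 hny0 hny1 (M.adj_sub hxy)).symm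
      refine (hmemS y).mpr (Or.inr ⟨hny0, hny1, ?_⟩)
      rw [hcolx] at hcoly
      cases hcy : col y with
      | true => rfl
      | false => exact absurd hcy hcoly
  -- independence of S
  have hind : ∀ ⦃x⦄, x ∈ S → ∀ ⦃y⦄, y ∈ S → ¬ Γ.Adj x y := by
    intro x hx y hy hadj
    rcases (hmemS x).mp hx with hx0 | ⟨hnx0, hnx1, hcolx⟩
    · exact hTS y (r0_adj hm hx0 hadj) hy
    · rcases (hmemS y).mp hy with hy0 | ⟨hny0, hny1, hcoly⟩
      · exact hnx1 (r0_adj hm hy0 hadj.symm)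
      · have := hcol x y hnx0 hnx1 hny0 hny1 hadj
        rw [hcolx, hcoly] at this
        exact this rfl
  -- the matched-vertex function
  have hScompl_matched : ∀ v : V, v ∉ S → v ∈ M.verts := by
    intro v hv
    by_contra hvm
    exact hv (hR0S v (RT.exposed v hvm))
  set f : Sym2 V → V := fun e =>
    if h : ∃ v, v ∈ e ∧ v ∈ Sᶜ then h.choose else (Quot.out e).1 with hfdef
  have hfspec : ∀ e : Sym2 V, (∃ v, v ∈ e ∧ v ∈ Sᶜ) → f e ∈ e ∧ f e ∈ Sᶜ := by
    intro e h
    rw [hfdef]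
    simp only [dif_pos h]
    exact h.choose_spec
  have hex : ∀ e ∈ M.edgeSet, ∃ v, v ∈ e ∧ v ∈ Sᶜ := by
    intro e he
    induction e using Sym2.ind with
    | _ x y =>
      have hxy : M.Adj x y := Subgraph.mem_edgeSet.mp he
      by_cases hx : x ∈ S
      · exact ⟨y, Sym2.mem_mk_right x y, medge x y hxy hx⟩
      · exact ⟨x, Sym2.mem_mk_left x y, hx⟩
  have hbij : Set.BijOn f M.edgeSet Sᶜ := by
    refine ⟨fun e he => (hfspec e (hex e he)).2, ?_, ?_⟩
    · intro e he e' he' hfe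
      have h1 := hfspec e (hex e he)
      have h2 := hfspec e' (hex e' he')
      exact mem_medge_eq hm he he' h1.1 (hfe ▸ h2.1)
    · intro v hv
      have hvm : v ∈ M.verts := hScompl_matched v hv
      obtain ⟨w, hw, _⟩ := hm hvm
      refine ⟨s(v, w), Subgraph.mem_edgeSet.mpr hw, ?_⟩
      have hsp := hfspec s(v, w) ⟨v, Sym2.mem_mk_left v w, hv⟩
      rcases Sym2.mem_iff.mp hsp.1 with h | h
      · exact h
      · exfalso
        have : w ∈ S := medge' v w hw hv
        rw [h] at hsp
        exact hsp.2 this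
  have hcard : M.edgeSet.ncard = (Sᶜ).ncard := by
    rw [← hbij.image_eq]
    exact (Set.ncard_image_of_injOn hbij.injOn).symm
  refine ⟨S, hind, ?_⟩
  rw [hcard]
  exact Set.ncard_add_ncard_compl S

end forest

section coloring
variable [DecidableEq V] {Γ : SimpleGraph V}

lemma support_edge : ∀ {a b : V} (w : Γ.Walk a b), 0 < w.length →
    ∀ v ∈ w.support, ∃ e ∈ w.edges, v ∈ e := by
  intro a b w
  induction w with
  | nil => intro h; simp at h
  | @cons a c b ha p ih =>
    intro _ v hv
    rcases List.mem_cons.mp (by rwa [Walk.support_cons] at hv) with rfl | hv'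
    · exact ⟨s(v, c), List.mem_cons_self, Sym2.mem_mk_left _ _⟩
    · cases p with
      | nil =>
        have : v = c := by simpa using hv'
        subst this
        exact ⟨s(a, v), List.mem_cons_self, Sym2.mem_mk_right _ _⟩
      | cons hb q =>
        obtain ⟨e, he, hve⟩ := ih (by simp) v hv'
        exact ⟨e, List.mem_cons_of_mem _ he, hve⟩

/-- A graph with no odd cycle is 2-colorable. -/
lemma col2 (hnoc : ∀ (z : V) (c : Γ.Walk z z), c.IsCycle → ¬ Odd c.length) :
    ∃ col : V → Bool, ∀ x y : V, Γ.Adj x y → col x ≠ col y := by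
  classical
  have hnoodd : ∀ (z : V) (w : Γ.Walk z z), ¬ Odd w.length := by
    intro z w ho
    obtain ⟨z', c, hc, hoc⟩ := oddClosedPlain w.length w le_rfl ho
    exact hnoc z' c hc hoc
  set rep : V → V := fun v => (Γ.connectedComponentMk v).out with hrepdef
  have hreach : ∀ v, Γ.Reachable (rep v) v := by
    intro v
    apply SimpleGraph.ConnectedComponent.exact
    rw [hrepdef]
    exact (Γ.connectedComponentMk v).out_eq
  have hpar : ∀ (a v : V) (p q : Γ.Walk a v), (Even p.length ↔ Even q.length) := by
    intro a v p q
    by_contra hne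
    have hodd : Odd (p.append q.reverse).length := by
      rw [Walk.length_append, Walk.length_reverse]
      rcases Nat.even_or_odd p.length with hp | hp
      · have hq : ¬ Even q.length := fun h => hne (by tauto)
        rw [Nat.not_even_iff_odd] at hq
        exact Even.add_odd hp hq
      · have hq : Even q.length := by
          by_contra hq
          rw [Nat.not_even_iff_odd] at hq
          exact hne (by constructor <;> intro h <;>
            [exact absurd h (Nat.not_even_iff_odd.mpr hp); exact absurd h (Nat.not_even_iff_odd.mpr hq)])
        exact Odd.add_even hp hq
    exact hnoodd a (p.append q.reverse) hodd
  refine ⟨fun v => decide (∃ p : Γ.Walk (rep v) v, Even p.length), ?_⟩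
  intro x y hadj
  have hrxy : rep x = rep y := by
    rw [hrepdef]
    simp only []
    rw [SimpleGraph.ConnectedComponent.connectedComponentMk_eq_of_adj hadj]
  obtain ⟨p⟩ := hreach x
  have hq : ∃ q : Γ.Walk (rep y) y, q.length = p.length + 1 := by
    rw [← hrxy]
    exact ⟨p.concat hadj, Walk.length_concat _ _⟩
  obtain ⟨q, hql⟩ := hq
  intro hcoleq
  have hx : decide (∃ p : Γ.Walk (rep x) x, Even p.length) = true ↔ Even p.length := by
    rw [decide_eq_true_iff]
    exact ⟨fun ⟨p', hp'⟩ => (hpar _ _ p' p).mp hp', fun h => ⟨p, h⟩⟩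
  have hy : decide (∃ p : Γ.Walk (rep y) y, Even p.length) = true ↔ Even q.length := by
    rw [decide_eq_true_iff]
    exact ⟨fun ⟨q', hq'⟩ => (hpar _ _ q' q).mp hq', fun h => ⟨q, h⟩⟩
  have hcoleq' : decide (∃ p : Γ.Walk (rep x) x, Even p.length) =
      decide (∃ p : Γ.Walk (rep y) y, Even p.length) := hcoleq
  have : Even p.length ↔ Even q.length := by
    rw [← hx, ← hy, hcoleq']
  rw [hql] at this
  rcases Nat.even_or_odd p.length with hp | hp
  · have := this.mp hp
    rw [Nat.even_add_one] at this
    exact this hp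
  · have hnp : ¬ Even p.length := Nat.not_even_iff_odd.mpr hp
    have : ¬ Even (p.length + 1) := fun h => hnp (this.mpr h)
    rw [Nat.even_add_one] at this
    exact this hnp

end coloring

section generic
variable [Fintype V] [DecidableEq V]

lemma exists_max_matching (Γ : SimpleGraph V) :
    ∃ M : Γ.Subgraph, M.IsMatching ∧
      ∀ N : Γ.Subgraph, N.IsMatching → N.edgeSet.ncard ≤ M.edgeSet.ncard := by
  classical
  set s : Set ℕ := {n | ∃ M : Γ.Subgraph, M.IsMatching ∧ M.edgeSet.ncard = n} with hsdef
  have hbot : (⊥ : Γ.Subgraph).IsMatching := by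
    intro v hv
    simp only [Subgraph.verts_bot, Set.mem_empty_iff_false] at hv
  have hne : s.Nonempty := ⟨(⊥ : Γ.Subgraph).edgeSet.ncard, ⟨⊥, hbot, rfl⟩⟩
  have hbdd : BddAbove s := by
    refine ⟨Nat.card (Sym2 V), ?_⟩
    rintro n ⟨M, _, rfl⟩
    rw [← Set.ncard_univ]
    exact Set.ncard_le_ncard (Set.subset_univ _) (Set.toFinite _)
  obtain ⟨M, hM, hMc⟩ := Nat.sSup_mem hne hbdd
  refine ⟨M, hM, fun N hN => ?_⟩
  rw [hMc]
  exact le_csSup hbdd ⟨N, hN, rfl⟩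

/-- König–Egerváry for graphs without odd cycles. -/
lemma kb (Γ : SimpleGraph V)
    (hnoc : ∀ (z : V) (c : Γ.Walk z z), c.IsCycle → ¬ Odd c.length)
    (N : Γ.Subgraph) (hN : N.IsMatching)
    (hNmax : ∀ N' : Γ.Subgraph, N'.IsMatching → N'.edgeSet.ncard ≤ N.edgeSet.ncard) :
    ∃ S : Set V, (∀ ⦃x⦄, x ∈ S → ∀ ⦃y⦄, y ∈ S → ¬ Γ.Adj x y) ∧
      S.ncard + N.edgeSet.ncard = Nat.card V := by
  have hbad : ¬ BadConc Γ N := by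
    rintro (⟨N', hN', hc⟩ | ⟨z, c, hc, hoc, _⟩)
    · have := hNmax N' hN'
      omega
    · exact hnoc z c hc hoc
  obtain ⟨col, hcol⟩ := col2 hnoc
  exact forest_main hN hbad col (fun x y _ _ _ _ hadj => hcol x y hadj)

/-- A vertex missed by some maximum matching is evenly reachable. -/
lemma missable {Γ : SimpleGraph V} {M : Γ.Subgraph} (hm : M.IsMatching)
    (hbad : ¬ BadConc Γ M) :
    ∀ (n : ℕ) (N : Γ.Subgraph), N.IsMatching → N.edgeSet.ncard = M.edgeSet.ncard →
      ((M.edgeSet \ N.edgeSet) ∪ (N.edgeSet \ M.edgeSet)).ncard = n →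
      ∀ v ∉ N.verts, RT Γ M false v := by
  intro n
  induction n using Nat.strong_induction_on with
  | _ n ih =>
    intro N hN hsize hd v hv
    by_cases hvM : v ∈ M.verts
    swap
    · exact RT.exposed v hvM
    obtain ⟨w, hw, _⟩ := hm hvM
    have hfM : s(v, w) ∈ M.edgeSet := Subgraph.mem_edgeSet.mpr hw
    have hfN : s(v, w) ∉ N.edgeSet := by
      intro h
      exact hv (N.edge_vert (Subgraph.mem_edgeSet.mp h))
    by_cases hwN : w ∈ N.verts
    swap
    · -- both v and w exposed in N : bigger matching
      exfalso
      obtain ⟨N', hN', hNe⟩ := add_edge_matching hN (M.adj_sub hw) hv hwN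
      apply hbad
      left
      refine ⟨N', hN', ?_⟩
      rw [hNe, Set.ncard_insert_of_notMem hfN, hsize]
    obtain ⟨w', hw', _⟩ := hN hwN
    have hw'v : w' ≠ v := by
      rintro rfl
      exact hv (N.edge_vert hw'.symm)
    have hgN : s(w, w') ∈ N.edgeSet := Subgraph.mem_edgeSet.mpr hw'
    have hgM : s(w, w') ∉ M.edgeSet := by
      intro h
      exact hw'v (matching_unique hm (Subgraph.mem_edgeSet.mp h) hw.symm)
    obtain ⟨N₂, hN₂, hN₂v, hN₂e⟩ := swap_matching hN hw' (M.adj_sub hw) hv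
    have hfN₂ : s(v, w) ∉ N.edgeSet := hfN
    have hN₂c : N₂.edgeSet.ncard = M.edgeSet.ncard := by
      rw [hN₂e, Set.ncard_exchange hfN hgN, hsize]
    have hw'N₂ : w' ∉ N₂.verts := by
      rw [hN₂v]
      intro hmem
      rcases Set.mem_insert_iff.mp hmem with h | h
      · exact hw'v h
      · exact h.2 rfl
    -- symmetric difference decreases
    have hsub : ((M.edgeSet \ N₂.edgeSet) ∪ (N₂.edgeSet \ M.edgeSet)) ⊂
        ((M.edgeSet \ N.edgeSet) ∪ (N.edgeSet \ M.edgeSet)) := by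
      constructor
      · rintro e (⟨heM, heN₂⟩ | ⟨heN₂, heM⟩)
        · left
          refine ⟨heM, fun heN => heN₂ ?_⟩
          rw [hN₂e]
          refine Set.mem_insert_of_mem _ ⟨heN, ?_⟩
          simp only [Set.mem_singleton_iff]
          rintro rfl
          exact hgM heM
        · right
          rw [hN₂e] at heN₂
          rcases Set.mem_insert_iff.mp heN₂ with rfl | hh
          · exact absurd hfM heM
          · exact ⟨hh.1, heM⟩
      · intro hsub'
        have h1 : s(v, w) ∈ (M.edgeSet \ N.edgeSet) ∪ (N.edgeSet \ M.edgeSet) :=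
          Or.inl ⟨hfM, hfN⟩
        have h2 := hsub' h1
        rcases h2 with ⟨_, hc⟩ | ⟨_, hc2⟩
        · exact hc (by rw [hN₂e]; exact Set.mem_insert _ _)
        · exact hc2 hfM
    have hlt : ((M.edgeSet \ N₂.edgeSet) ∪ (N₂.edgeSet \ M.edgeSet)).ncard < n := by
      rw [← hd]
      exact Set.ncard_lt_ncard hsub (Set.toFinite _)
    have hw'R0 : RT Γ M false w' := ih _ hlt N₂ hN₂ hN₂c rfl w' hw'N₂
    have hadj : Γ.Adj w' w := (N.adj_sub hw').symm
    have hnm : s(w', w) ∉ M.edgeSet := by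
      rw [Sym2.eq_swap]
      exact hgM
    exact RT.evenstep (RT.oddstep hw'R0 hadj hnm) hw.symm
  
lemma indep_matching_bound {Γ : SimpleGraph V} (S : Set V)
    (hS : ∀ ⦃x⦄, x ∈ S → ∀ ⦃y⦄, y ∈ S → ¬ Γ.Adj x y)
    (N : Γ.Subgraph) (hN : N.IsMatching) :
    S.ncard + N.edgeSet.ncard ≤ Nat.card V := by
  classical
  set f : Sym2 V → V := fun e =>
    if h : ∃ v, v ∈ e ∧ v ∈ Sᶜ then h.choose else (Quot.out e).1 with hfdef
  have hfspec : ∀ e : Sym2 V, (∃ v, v ∈ e ∧ v ∈ Sᶜ) → f e ∈ e ∧ f e ∈ Sᶜ := by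
    intro e h
    rw [hfdef]
    simp only [dif_pos h]
    exact h.choose_spec
  have hex : ∀ e ∈ N.edgeSet, ∃ v, v ∈ e ∧ v ∈ Sᶜ := by
    intro e he
    induction e using Sym2.ind with
    | _ x y =>
      have hxy : Γ.Adj x y := N.adj_sub (Subgraph.mem_edgeSet.mp he)
      by_cases hx : x ∈ S
      · refine ⟨y, Sym2.mem_mk_right x y, fun hy => hS hx hy hxy⟩
      · exact ⟨x, Sym2.mem_mk_left x y, hx⟩
  have hmap : Set.MapsTo f N.edgeSet Sᶜ := fun e he => (hfspec e (hex e he)).2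
  have hinj : Set.InjOn f N.edgeSet := by
    intro e he e' he' hfe
    have h1 := hfspec e (hex e he)
    have h2 := hfspec e' (hex e' he')
    exact mem_medge_eq hN he he' h1.1 (hfe ▸ h2.1)
  have hle : N.edgeSet.ncard ≤ (Sᶜ).ncard := by
    rw [← Set.ncard_image_of_injOn hinj]
    exact Set.ncard_le_ncard (Set.image_subset_iff.mpr hmap) (Set.toFinite _)
  have := Set.ncard_add_ncard_compl S
  omega

end generic


section assembly
variable [Fintype V] [DecidableEq V] {G : SimpleGraph V}

lemma mapLe_support {Γ Γ' : SimpleGraph V} (h : Γ ≤ Γ') {u v : V} (p : Γ.Walk u v) :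
    (p.mapLe h).support = p.support := by
  have hid : (⇑(Hom.ofLE h)) = id := rfl
  rw [Walk.mapLe, Walk.support_map, hid, List.map_id]

lemma mapLe_edges {Γ Γ' : SimpleGraph V} (h : Γ ≤ Γ') {u v : V} (p : Γ.Walk u v) :
    (p.mapLe h).edges = p.edges := by
  have hid : (⇑(Hom.ofLE h)) = id := rfl
  rw [Walk.mapLe, Walk.edges_map, hid, Sym2.map_id, List.map_id]

lemma mapLe_length {Γ Γ' : SimpleGraph V} (h : Γ ≤ Γ') {u v : V} (p : Γ.Walk u v) :
    (p.mapLe h).length = p.length := by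
  simp

lemma subgraph_transfer {Γ Γ' : SimpleGraph V} (h : Γ ≤ Γ') (N : Γ.Subgraph) :
    ∃ N' : Γ'.Subgraph, N'.verts = N.verts ∧ N'.edgeSet = N.edgeSet ∧
      (N.IsMatching → N'.IsMatching) := by
  refine ⟨⟨N.verts, N.Adj, fun ha => h (N.adj_sub ha), fun ha => N.edge_vert ha,
    N.symm⟩, rfl, ?_, ?_⟩
  · ext e
    induction e using Sym2.ind with
    | _ x y => rfl
  · intro hm v hv
    exact hm hv

lemma matchNum_eq {M : G.Subgraph} (hM : IsMaxMatching G M) :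
    matchNum G = M.edgeSet.ncard := by
  unfold matchNum
  have hbdd : BddAbove {n | ∃ N : G.Subgraph, N.IsMatching ∧ N.edgeSet.ncard = n} := by
    refine ⟨Nat.card (Sym2 V), ?_⟩
    rintro n ⟨N, _, rfl⟩
    rw [← Set.ncard_univ]
    exact Set.ncard_le_ncard (Set.subset_univ _) (Set.toFinite _)
  have hmem : M.edgeSet.ncard ∈ {n | ∃ N : G.Subgraph, N.IsMatching ∧ N.edgeSet.ncard = n} :=
    ⟨M, hM.1, rfl⟩
  refine le_antisymm ?_ (le_csSup hbdd hmem)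
  apply csSup_le ⟨M.edgeSet.ncard, hmem⟩
  rintro n ⟨N, hN, rfl⟩
  exact hM.2 N hN

lemma indepNum_bdd : BddAbove {n | ∃ S : Set V, IsIndep G S ∧ S.ncard = n} := by
  refine ⟨Nat.card V, ?_⟩
  rintro n ⟨S, _, rfl⟩
  rw [← Set.ncard_univ]
  exact Set.ncard_le_ncard (Set.subset_univ _) (Set.toFinite _)

lemma indepNum_ge {S : Set V} (hS : IsIndep G S) : S.ncard ≤ _root_.indepNum G :=
  le_csSup indepNum_bdd ⟨S, hS, rfl⟩

lemma indepNum_attained : ∃ S : Set V, IsIndep G S ∧ S.ncard = _root_.indepNum G := by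
  have hne : {n | ∃ S : Set V, IsIndep G S ∧ S.ncard = n}.Nonempty :=
    ⟨0, ∅, fun u hu => absurd hu (Set.notMem_empty u), Set.ncard_empty V⟩
  obtain ⟨S, hS, hSn⟩ := Nat.sSup_mem hne indepNum_bdd
  exact ⟨S, hS, hSn⟩

lemma alpha_mu_le {M : G.Subgraph} (hM : IsMaxMatching G M) :
    _root_.indepNum G + matchNum G ≤ Nat.card V := by
  obtain ⟨S, hS, hSn⟩ := indepNum_attained (G := G)
  rw [← hSn, matchNum_eq hM]
  exact indep_matching_bound S hS M hM.1

end assembly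

end AB

open AB in
/-- Every maximum matching of an almost bipartite non-König–Egerváry graph
contains at least one edge of its unique odd cycle. -/
theorem stmt_15 {V : Type u} [Fintype V] (G : SimpleGraph V)
    (hab : AlmostBipartite G) (hke : ¬ IsKE G)
    (M : G.Subgraph) (hM : IsMaxMatching G M) :
    ∀ C : Set V, IsOddCycle G C → ∃ e ∈ M.edgeSet, ∀ v ∈ e, v ∈ C := by
  classical
  intro C hC
  by_contra hcon
  push_neg at hcon
  -- hcon : ∀ e ∈ M.edgeSet, ∃ v ∈ e, v ∉ C
  obtain ⟨hm, hMmax⟩ := hM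
  -- uniqueness of the odd cycle's vertex set
  obtain ⟨C₀, hC₀, huniq₀⟩ := hab
  have huniq : ∀ C' : Set V, IsOddCycle G C' → C' = C := by
    intro C' h'
    rw [huniq₀ C' h', huniq₀ C hC]
  -- both bad outcomes are impossible
  have hbadG : ¬ AB.BadConc G M := by
    rintro (⟨N, hN, hc⟩ | ⟨z, c, hcyc, hodd, e, hec, heM⟩)
    · have := hMmax N hN
      omega
    · have hoc : IsOddCycle G {v | v ∈ c.support} :=
        ⟨z, c, hcyc, hodd, fun v => Iff.rfl⟩
      have hCsup : {v | v ∈ c.support} = C := huniq _ hoc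
      obtain ⟨v, hve, hvC⟩ := hcon e heM
      apply hvC
      rw [← hCsup]
      induction e using Sym2.ind with
      | _ x y =>
        rcases Sym2.mem_iff.mp hve with rfl | rfl
        · exact Walk.fst_mem_support_of_mem_edges c hec
        · exact Walk.snd_mem_support_of_mem_edges c hec
  -- strict inequality from non-KE
  have hle := alpha_mu_le ⟨hm, hMmax⟩
  have hkecard : ¬ (_root_.indepNum G + matchNum G = Nat.card V) := by
    intro h
    exact hke h
  have hpke : _root_.indepNum G + matchNum G + 1 ≤ Nat.card V := by omega
  have hmnum : matchNum G = M.edgeSet.ncard := matchNum_eq ⟨hm, hMmax⟩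
  -- every vertex of C is evenly reachable
  have hCreach : ∀ v₀ ∈ C, AB.RT G M false v₀ := by
    intro v₀ hv₀
    set Gv : SimpleGraph V := G.deleteEdges {e : Sym2 V | v₀ ∈ e} with hGvdef
    have hGvle : Gv ≤ G := SimpleGraph.deleteEdges_le _
    have hGvnoc : ∀ (z : V) (c : Gv.Walk z z), c.IsCycle → ¬ Odd c.length := by
      intro z c hcyc hodd
      have hcyc' : (c.mapLe hGvle).IsCycle := hcyc.mapLe _
      have hodd' : Odd (c.mapLe hGvle).length := by rwa [mapLe_length]
      have hoc : IsOddCycle G {v | v ∈ (c.mapLe hGvle).support} :=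
        ⟨z, c.mapLe hGvle, hcyc', hodd', fun v => Iff.rfl⟩
      have hCsup : {v | v ∈ (c.mapLe hGvle).support} = C := huniq _ hoc
      have hv₀sup : v₀ ∈ c.support := by
        have : v₀ ∈ {v | v ∈ (c.mapLe hGvle).support} := by rw [hCsup]; exact hv₀
        rwa [mapLe_support] at this
      have hpos : 0 < c.length := by
        have := hcyc.three_le_length
        omega
      obtain ⟨e, hec, hv₀e⟩ := AB.support_edge c hpos v₀ hv₀sup
      have heGv : e ∈ Gv.edgeSet := Walk.edges_subset_edgeSet c hec
      induction e using Sym2.ind with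
      | _ x y =>
        rw [SimpleGraph.mem_edgeSet, hGvdef, SimpleGraph.deleteEdges_adj] at heGv
        exact heGv.2 hv₀e
    obtain ⟨Nv, hNv, hNvmax⟩ := AB.exists_max_matching Gv
    obtain ⟨Sv, hSvind, hSvcard⟩ := AB.kb Gv hGvnoc Nv hNv hNvmax
    obtain ⟨N', hN'v, hN'e, hN'm⟩ := AB.subgraph_transfer hGvle Nv
    have hN'mat := hN'm hNv
    -- size of Sv
    have hSvG : IsIndep G (Sv \ {v₀}) := by
      intro x hx y hy hadj
      refine hSvind hx.1 hy.1 ?_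
      rw [hGvdef, SimpleGraph.deleteEdges_adj]
      refine ⟨hadj, ?_⟩
      simp only [Set.mem_setOf_eq, Sym2.mem_iff]
      rintro (rfl | rfl)
      · exact hx.2 rfl
      · exact hy.2 rfl
    have hSvle : Sv.ncard ≤ _root_.indepNum G + 1 := by
      have h1 : Sv.ncard ≤ (Sv \ {v₀}).ncard + 1 := by
        by_cases hv : v₀ ∈ Sv
        · rw [Set.ncard_diff_singleton_add_one hv]
        · rw [Set.diff_singleton_eq_self hv]
          omega
      have h2 := indepNum_ge hSvG
      omega
    -- Nv has the size of a maximum matching of G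
    have hNvle : Nv.edgeSet.ncard ≤ matchNum G := by
      rw [hmnum, ← hN'e]
      exact hMmax N' hN'mat
    have hNveq : Nv.edgeSet.ncard = M.edgeSet.ncard := by
      rw [← hmnum]
      omega
    have hv₀N' : v₀ ∉ N'.verts := by
      rw [hN'v]
      intro hmem
      obtain ⟨y, hy, _⟩ := hNv hmem
      have : Gv.Adj v₀ y := Nv.adj_sub hy
      rw [hGvdef, SimpleGraph.deleteEdges_adj] at this
      exact this.2 (Sym2.mem_mk_left _ _)
    have hN'c : N'.edgeSet.ncard = M.edgeSet.ncard := by rw [hN'e]; exact hNveq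
    exact AB.missable hm hbadG _ N' hN'mat hN'c rfl v₀ hv₀N'
  -- a cycle vertex that is evenly reachable
  obtain ⟨u, w, hwc, hwo, hwsupp⟩ := hC
  have huC : u ∈ C := (hwsupp u).mp (Walk.start_mem_support w)
  have hu0 : AB.RT G M false u := hCreach u huC
  -- 2-coloring of the unreachable part
  set ΓO : SimpleGraph V := ⟨fun a b => G.Adj a b ∧
      (¬ AB.RT G M false a ∧ ¬ AB.RT G M true a) ∧
      (¬ AB.RT G M false b ∧ ¬ AB.RT G M true b),
    ⟨fun a b h => ⟨h.1.symm, h.2.2, h.2.1⟩⟩,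
    ⟨fun a h => G.loopless.irrefl a h.1⟩⟩ with hΓOdef
  have hΓOle : ΓO ≤ G := fun a b h => h.1
  have hΓOnoc : ∀ (z : V) (c : ΓO.Walk z z), c.IsCycle → ¬ Odd c.length := by
    intro z c hcyc hodd
    have hcyc' : (c.mapLe hΓOle).IsCycle := hcyc.mapLe _
    have hodd' : Odd (c.mapLe hΓOle).length := by rwa [mapLe_length]
    have hoc : IsOddCycle G {v | v ∈ (c.mapLe hΓOle).support} :=
      ⟨z, c.mapLe hΓOle, hcyc', hodd', fun v => Iff.rfl⟩
    have hCsup : {v | v ∈ (c.mapLe hΓOle).support} = C := huniq _ hoc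
    have husup : u ∈ c.support := by
      have : u ∈ {v | v ∈ (c.mapLe hΓOle).support} := by rw [hCsup]; exact huC
      rwa [mapLe_support] at this
    have hpos : 0 < c.length := by
      have := hcyc.three_le_length
      omega
    obtain ⟨e, hec, hue⟩ := AB.support_edge c hpos u husup
    have heΓO : e ∈ ΓO.edgeSet := Walk.edges_subset_edgeSet c hec
    induction e using Sym2.ind with
    | _ x y =>
      rw [SimpleGraph.mem_edgeSet] at heΓO
      rcases Sym2.mem_iff.mp hue with rfl | rfl
      · exact heΓO.2.1.1 hu0
      · exact heΓO.2.2.1 hu0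
  obtain ⟨col, hcol⟩ := AB.col2 hΓOnoc
  obtain ⟨S, hSind, hScard⟩ := AB.forest_main hm hbadG col
    (fun x y hx0 hx1 hy0 hy1 hadj => hcol x y ⟨hadj, ⟨hx0, hx1⟩, ⟨hy0, hy1⟩⟩)
  have hSindG : IsIndep G S := hSind
  have := indepNum_ge hSindG
  rw [hmnum] at hpke
  omega
end

section
/- Let I be a critical independent set of a finite simple graph G and let S be a nonempty subset of N(I) with |N(S) ∩ I| = |S|. Then I \ (N(S) ∩ I) is also a critical independent set of G. -/
open SimpleGraph

universe u

variable {V : Type u}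

/-- Removing from a critical independent set `I` the `I`-neighbors of a tight
set `S ⊆ N(I)` yields again a critical independent set. -/
theorem stmt_18 {V : Type u} [Fintype V] (G : SimpleGraph V) (I S : Set V)
    (hI : IsCriticalIndep G I) (hS : S ⊆ NSet G I) (hne : S.Nonempty)
    (htight : (NSet G S ∩ I).ncard = S.ncard) :
    IsCriticalIndep G (I \ (NSet G S ∩ I)) := by
  obtain ⟨hind, hmax⟩ := hI
  set A := NSet G S ∩ I with hA
  have hsub : A ⊆ I := Set.inter_subset_right
  have hind' : IsIndep G (I \ A) := fun u hu v hv => hind hu.1 hv.1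
  refine ⟨hind', fun T hT => (hmax T hT).trans ?_⟩
  have hcard1 : (I \ A).ncard = I.ncard - A.ncard := Set.ncard_diff hsub (Set.toFinite _)
  have hNsub : NSet G (I \ A) ⊆ NSet G I \ S := by
    rintro v ⟨u, hu, hadj⟩
    exact ⟨⟨u, hu.1, hadj⟩, fun hvS => hu.2 ⟨⟨v, hvS, hadj.symm⟩, hu.1⟩⟩
  have hcard2 : (NSet G (I \ A)).ncard ≤ (NSet G I).ncard - S.ncard := by
    calc (NSet G (I \ A)).ncard ≤ (NSet G I \ S).ncard :=
          Set.ncard_le_ncard hNsub (Set.toFinite _)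
      _ = (NSet G I).ncard - S.ncard := Set.ncard_diff hS (Set.toFinite _)
  have h1 : A.ncard ≤ I.ncard := Set.ncard_le_ncard hsub (Set.toFinite _)
  have h2 : S.ncard ≤ (NSet G I).ncard := Set.ncard_le_ncard hS (Set.toFinite _)
  unfold diffZ
  rw [hcard1, htight]
  omega
end
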